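/- arXiv:1201.0311 — 6 statements merged into one kernel-verified Lean document; each statement's English description precedes it below -/
import Mathlib

section
/- For every σ > 0, the quarter-circle distribution q_σ has negative free kurtosis: writing m₁ = ∫ x dq_σ(x) for its mean, the central moments satisfy ∫ (x − m₁)⁴ dq_σ(x) < 2·(∫ (x − m₁)² dq_σ(x))². -/
open MeasureTheory Real

open intervalIntegral Set in
private lemma qcS0 : ∫ θ in (0:ℝ)..(π/2), Real.sin θ ^ 0 = π/2 := by simp
open intervalIntegral Set in
private lemma qcS1 : ∫ θ in (0:ℝ)..(π/2), Real.sin θ ^ 1 = 1 := by simp [integral_sin]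
open intervalIntegral Set in
private lemma qcS2 : ∫ θ in (0:ℝ)..(π/2), Real.sin θ ^ 2 = π/4 := by
  rw [integral_sin_sq]; simp; ring
open intervalIntegral Set in
private lemma qcS3 : ∫ θ in (0:ℝ)..(π/2), Real.sin θ ^ 3 = 2/3 := by norm_num
open intervalIntegral Set in
private lemma qcS4 : ∫ θ in (0:ℝ)..(π/2), Real.sin θ ^ 4 = 3*π/16 := by
  have h := integral_sin_pow (a := 0) (b := π/2) 2
  rw [qcS2] at h; norm_num at h; linarith
open intervalIntegral Set in
private lemma qcS5 : ∫ θ in (0:ℝ)..(π/2), Real.sin θ ^ 5 = 8/15 := by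
  have h := integral_sin_pow (a := 0) (b := π/2) 3
  rw [qcS3] at h; norm_num at h; linarith
open intervalIntegral Set in
private lemma qcS6 : ∫ θ in (0:ℝ)..(π/2), Real.sin θ ^ 6 = 5*π/32 := by
  have h := integral_sin_pow (a := 0) (b := π/2) 4
  rw [qcS4] at h; norm_num at h; linarith

open intervalIntegral Set in
private lemma qcJsub (σ : ℝ) (hσ : 0 < σ) (k : ℕ) :
    ∫ x in (0:ℝ)..(2*σ), Real.sqrt (4*σ^2 - x^2) * x^k
      = (2*σ)^(k+2) * ((∫ θ in (0:ℝ)..(π/2), Real.sin θ ^ k)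
          - ∫ θ in (0:ℝ)..(π/2), Real.sin θ ^ (k+2)) := by
  have hg : Continuous (fun x : ℝ => Real.sqrt (4*σ^2 - x^2) * x^k) := by fun_prop
  have hsub := integral_comp_smul_deriv (a := 0) (b := π/2)
    (f := fun θ => 2*σ*Real.sin θ) (f' := fun θ => 2*σ*Real.cos θ)
    (g := fun x => Real.sqrt (4*σ^2 - x^2) * x^k)
    (fun θ _ => by simpa [mul_comm] using (Real.hasDerivAt_sin θ).const_mul (2*σ))
    (by fun_prop) hg
  simp only [Real.sin_pi_div_two, Real.sin_zero, mul_one, mul_zero] at hsub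
  rw [← hsub]
  have hcongr : ∀ θ ∈ uIcc (0:ℝ) (π/2),
      (2*σ*Real.cos θ) • ((fun x => Real.sqrt (4*σ^2 - x^2) * x^k) ∘ (fun θ => 2*σ*Real.sin θ)) θ
        = (2*σ)^(k+2) * (Real.sin θ ^ k - Real.sin θ ^ (k+2)) := by
    intro θ hθ
    rw [uIcc_of_le (by positivity)] at hθ
    have hc : 0 ≤ Real.cos θ :=
      Real.cos_nonneg_of_mem_Icc ⟨by linarith [hθ.1, pi_pos], hθ.2⟩
    have hs : Real.sqrt (4*σ^2 - (2*σ*Real.sin θ)^2) = 2*σ*Real.cos θ := by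
      have h1 : 4*σ^2 - (2*σ*Real.sin θ)^2 = (2*σ*Real.cos θ)^2 := by
        nlinarith [Real.sin_sq_add_cos_sq θ]
      rw [h1, Real.sqrt_sq (by positivity)]
    have hc2 : Real.cos θ ^ 2 = 1 - Real.sin θ ^ 2 := Real.cos_sq' θ
    simp only [Function.comp, smul_eq_mul, hs]
    rw [mul_pow, pow_add, pow_add (Real.sin θ) k 2]
    linear_combination ((2*σ)^k * (2*σ)^2 * Real.sin θ ^ k) * hc2
  rw [intervalIntegral.integral_congr hcongr, intervalIntegral.integral_const_mul,
    intervalIntegral.integral_sub (by apply Continuous.intervalIntegrable; fun_prop)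
      (by apply Continuous.intervalIntegrable; fun_prop)]

/-- The quarter-circle distribution with parameter `σ`: the measure on `ℝ` with density
`(1/(π σ²)) √(4σ² − x²)` on `[0, 2σ]` and `0` otherwise, w.r.t. Lebesgue measure. -/
noncomputable def quarterCircle (σ : ℝ) : Measure ℝ :=
  volume.withDensity (fun x =>
    ENNReal.ofReal (if x ∈ Set.Icc 0 (2 * σ) then (1 / (π * σ ^ 2)) * Real.sqrt (4 * σ ^ 2 - x ^ 2) else 0))

open intervalIntegral Set in
open scoped ENNReal NNReal in
private lemma qc_integral (σ : ℝ) (hσ : 0 < σ) (g : ℝ → ℝ) :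
    ∫ x, g x ∂(quarterCircle σ)
      = ∫ x in (0:ℝ)..(2*σ), (1 / (π * σ ^ 2)) * (Real.sqrt (4 * σ ^ 2 - x ^ 2) * g x) := by
  have hmeas : Measurable (fun x : ℝ =>
      (if x ∈ Set.Icc 0 (2 * σ) then (1 / (π * σ ^ 2)) * Real.sqrt (4 * σ ^ 2 - x ^ 2) else 0).toNNReal) := by
    apply Measurable.real_toNNReal
    apply Measurable.ite measurableSet_Icc
    · fun_prop
    · exact measurable_const
  have hrw : quarterCircle σ = volume.withDensity (fun x =>
      ((fun x : ℝ => (if x ∈ Set.Icc 0 (2 * σ) then (1 / (π * σ ^ 2)) * Real.sqrt (4 * σ ^ 2 - x ^ 2) else 0).toNNReal) x : ℝ≥0∞)) := rfl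
  rw [hrw, integral_withDensity_eq_integral_smul hmeas]
  have hind : ∀ x : ℝ,
      (if x ∈ Set.Icc 0 (2 * σ) then (1 / (π * σ ^ 2)) * Real.sqrt (4 * σ ^ 2 - x ^ 2) else 0).toNNReal • g x
        = Set.indicator (Set.Icc 0 (2*σ)) (fun x => (1 / (π * σ ^ 2)) * (Real.sqrt (4 * σ ^ 2 - x ^ 2) * g x)) x := by
    intro x
    rw [Set.indicator]
    split_ifs with hx
    · rw [NNReal.smul_def, Real.coe_toNNReal _ (by positivity), smul_eq_mul]; ring
    · simp
  rw [integral_congr_ae (Filter.Eventually.of_forall hind)]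
  rw [MeasureTheory.integral_indicator measurableSet_Icc, integral_Icc_eq_integral_Ioc,
    ← intervalIntegral.integral_of_le (by positivity : (0:ℝ) ≤ 2*σ)]

open intervalIntegral in
theorem quarterCircle_neg_free_kurtosis (σ : ℝ) (hσ : 0 < σ) :
    (∫ x, (x - ∫ y, y ∂(quarterCircle σ)) ^ 4 ∂(quarterCircle σ)) <
      2 * (∫ x, (x - ∫ y, y ∂(quarterCircle σ)) ^ 2 ∂(quarterCircle σ)) ^ 2 := by
  have hπ : (0:ℝ) < π := pi_pos
  have ii : ∀ f : ℝ → ℝ, Continuous f → IntervalIntegrable f volume 0 (2*σ) :=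
    fun f hf => hf.intervalIntegrable _ _
  have hcsqrt : Continuous (fun x : ℝ => Real.sqrt (4*σ^2 - x^2)) := by fun_prop
  have Jv0 : ∫ x in (0:ℝ)..(2*σ), Real.sqrt (4*σ^2 - x^2) * x^0 = π*σ^2 := by
    rw [qcJsub σ hσ 0, qcS0, qcS2]; ring
  have Jv1 : ∫ x in (0:ℝ)..(2*σ), Real.sqrt (4*σ^2 - x^2) * x^1 = 8*σ^3/3 := by
    rw [qcJsub σ hσ 1, qcS1, qcS3]; ring
  have Jv2 : ∫ x in (0:ℝ)..(2*σ), Real.sqrt (4*σ^2 - x^2) * x^2 = π*σ^4 := by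
    rw [qcJsub σ hσ 2, qcS2, qcS4]; ring
  have Jv3 : ∫ x in (0:ℝ)..(2*σ), Real.sqrt (4*σ^2 - x^2) * x^3 = 64*σ^5/15 := by
    rw [qcJsub σ hσ 3, qcS3, qcS5]; ring
  have Jv4 : ∫ x in (0:ℝ)..(2*σ), Real.sqrt (4*σ^2 - x^2) * x^4 = 2*π*σ^6 := by
    rw [qcJsub σ hσ 4, qcS4, qcS6]; ring
  have hm : (∫ y, y ∂(quarterCircle σ)) = 8*σ/(3*π) := by
    rw [qc_integral σ hσ (fun y => y), intervalIntegral.integral_const_mul]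
    have : ∫ x in (0:ℝ)..(2*σ), Real.sqrt (4*σ^2 - x^2) * x
        = ∫ x in (0:ℝ)..(2*σ), Real.sqrt (4*σ^2 - x^2) * x^1 := by norm_num
    rw [this, Jv1]
    field_simp
  set m : ℝ := 8*σ/(3*π) with hmdef
  have h2 : (∫ x, (x - m) ^ 2 ∂(quarterCircle σ)) = σ^2 - 64*σ^2/(9*π^2) := by
    rw [qc_integral σ hσ _, intervalIntegral.integral_const_mul]
    have hsplit : (∫ x in (0:ℝ)..(2*σ), Real.sqrt (4*σ^2 - x^2) * (x - m)^2)
        = (∫ x in (0:ℝ)..(2*σ), Real.sqrt (4*σ^2 - x^2) * x^2)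
          - (2*m) * (∫ x in (0:ℝ)..(2*σ), Real.sqrt (4*σ^2 - x^2) * x^1)
          + m^2 * (∫ x in (0:ℝ)..(2*σ), Real.sqrt (4*σ^2 - x^2) * x^0) := by
      rw [← intervalIntegral.integral_const_mul, ← intervalIntegral.integral_const_mul,
        ← intervalIntegral.integral_sub (ii _ (by fun_prop)) (ii _ (by fun_prop)),
        ← intervalIntegral.integral_add (by apply ii; fun_prop) (ii _ (by fun_prop))]
      exact intervalIntegral.integral_congr (fun x _ => by ring)
    rw [hsplit, Jv0, Jv1, Jv2, hmdef]
    field_simp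
    ring
  have h4 : (∫ x, (x - m) ^ 4 ∂(quarterCircle σ))
      = 2*σ^4 - 128*σ^4/(45*π^2) - 4096*σ^4/(27*π^4) := by
    rw [qc_integral σ hσ _, intervalIntegral.integral_const_mul]
    have hsplit : (∫ x in (0:ℝ)..(2*σ), Real.sqrt (4*σ^2 - x^2) * (x - m)^4)
        = (∫ x in (0:ℝ)..(2*σ), Real.sqrt (4*σ^2 - x^2) * x^4)
          - (4*m) * (∫ x in (0:ℝ)..(2*σ), Real.sqrt (4*σ^2 - x^2) * x^3)
          + (6*m^2) * (∫ x in (0:ℝ)..(2*σ), Real.sqrt (4*σ^2 - x^2) * x^2)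
          - (4*m^3) * (∫ x in (0:ℝ)..(2*σ), Real.sqrt (4*σ^2 - x^2) * x^1)
          + m^4 * (∫ x in (0:ℝ)..(2*σ), Real.sqrt (4*σ^2 - x^2) * x^0) := by
      rw [← intervalIntegral.integral_const_mul, ← intervalIntegral.integral_const_mul,
        ← intervalIntegral.integral_const_mul, ← intervalIntegral.integral_const_mul,
        ← intervalIntegral.integral_sub (ii _ (by fun_prop)) (ii _ (by fun_prop)),
        ← intervalIntegral.integral_add (by apply ii; fun_prop) (ii _ (by fun_prop)),
        ← intervalIntegral.integral_sub (by apply ii; fun_prop) (ii _ (by fun_prop)),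
        ← intervalIntegral.integral_add (by apply ii; fun_prop) (ii _ (by fun_prop))]
      exact intervalIntegral.integral_congr (fun x _ => by ring)
    rw [hsplit, Jv0, Jv1, Jv2, Jv3, Jv4, hmdef]
    field_simp
    ring
  rw [hm, h2, h4]
  have hkey : π^2 < 800/81 := by nlinarith [pi_lt_d6, pi_gt_d6]
  have hrw2 : 2 * (σ^2 - 64*σ^2/(9*π^2))^2
      = (2*σ^4 - 128*σ^4/(45*π^2) - 4096*σ^4/(27*π^4))
        + (1152*σ^4/(45*π^4)) * (800/81 - π^2) := by
    field_simp
    ring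
  rw [hrw2]
  have hpos : 0 < (1152*σ^4/(45*π^4)) * (800/81 - π^2) := by
    apply mul_pos (by positivity)
    linarith
  linarith
end

section
/- Let μ be a probability measure on ℝ with μ((−∞, 0)) = 0 that satisfies either (i) μ({0}) > 0, or (ii) μ({0}) = 0 and ∫_(0,1] (1/x) dμ(x) = ∞. Then the Cauchy transform G_μ(x) = ∫ (x − t)⁻¹ dμ(t) tends to −∞ as x tends to 0 from the left, and consequently the reciprocal Cauchy transform F_μ(x) = (∫ (x − t)⁻¹ dμ(t))⁻¹ tends to 0 as x tends to 0 from the left. -/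
open MeasureTheory Filter Topology

theorem cauchyTransform_tendsto_atBot (μ : Measure ℝ) [IsProbabilityMeasure μ]
    (h : μ (Set.Iio 0) = 0)
    (hcases : 0 < μ {0} ∨ (μ {0} = 0 ∧ (∫⁻ x in Set.Ioc 0 1, ENNReal.ofReal (1 / x) ∂μ) = ⊤)) :
    Tendsto (fun x : ℝ => ∫ t, (x - t)⁻¹ ∂μ) (nhdsWithin 0 (Set.Iio 0)) atBot ∧
    Tendsto (fun x : ℝ => (∫ t, (x - t)⁻¹ ∂μ)⁻¹) (nhdsWithin 0 (Set.Iio 0)) (nhds 0) := by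
  have hae : ∀ᵐ t ∂μ, 0 ≤ t := by
    rw [ae_iff]
    convert h using 2
    ext t; simp [not_le]
  -- the positive-part function at x
  set g : ℝ → ℝ := fun x => ∫ t, (t - x)⁻¹ ∂μ with hgdef
  set L : ℝ → ENNReal := fun x => ∫⁻ t, ENNReal.ofReal (t - x)⁻¹ ∂μ with hLdef
  have hmeas : ∀ x : ℝ, Measurable fun t : ℝ => (t - x)⁻¹ :=
    fun x => (measurable_id.sub_const x).inv
  have hint : ∀ x : ℝ, x < 0 → Integrable (fun t => (t - x)⁻¹) μ := by
    intro x hx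
    refine (integrable_const ((-x)⁻¹)).mono' (hmeas x).aestronglyMeasurable ?_
    filter_upwards [hae] with t ht
    have h1 : 0 < -x := by linarith
    have h2 : 0 < t - x := by linarith
    rw [Real.norm_eq_abs, abs_of_nonneg (le_of_lt (inv_pos.mpr h2))]
    exact inv_anti₀ h1 (by linarith)
  have hgL : ∀ x : ℝ, x < 0 → g x = (L x).toReal := by
    intro x hx
    refine integral_eq_lintegral_of_nonneg_ae ?_ (hmeas x).aestronglyMeasurable
    filter_upwards [hae] with t ht
    have : 0 < t - x := by linarith
    exact le_of_lt (inv_pos.mpr this)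
  have hLfin : ∀ x : ℝ, x < 0 → L x ≠ ⊤ := by
    intro x hx
    have hbd : L x ≤ ENNReal.ofReal ((-x)⁻¹) := by
      rw [hLdef]
      calc ∫⁻ t, ENNReal.ofReal (t - x)⁻¹ ∂μ
          ≤ ∫⁻ _, ENNReal.ofReal ((-x)⁻¹) ∂μ := by
            refine lintegral_mono_ae ?_
            filter_upwards [hae] with t ht
            refine ENNReal.ofReal_le_ofReal ?_
            have h1 : 0 < -x := by linarith
            exact inv_anti₀ h1 (by linarith)
        _ = ENNReal.ofReal ((-x)⁻¹) := by
            rw [lintegral_const, measure_univ, mul_one]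
    exact ne_top_of_le_ne_top ENNReal.ofReal_ne_top hbd
  -- monotonicity
  have hmono : ∀ x y : ℝ, x ≤ y → y < 0 → g x ≤ g y := by
    intro x y hxy hy
    refine integral_mono_ae (hint x (lt_of_le_of_lt hxy hy)) (hint y hy) ?_
    filter_upwards [hae] with t ht
    have h1 : 0 < t - y := by linarith
    exact inv_anti₀ h1 (by linarith)
  -- limit function
  set F : ℝ → ENNReal := fun t => if t = 0 then ⊤ else ENNReal.ofReal t⁻¹ with hFdef
  have hFtop : ∫⁻ t, F t ∂μ = ⊤ := by
    rcases hcases with hpos | ⟨_, htop⟩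
    · refine top_unique ?_
      calc ⊤ = ∫⁻ t in {(0:ℝ)}, F t ∂μ := by
              rw [lintegral_singleton, hFdef]
              simp [ENNReal.top_mul hpos.ne']
        _ ≤ ∫⁻ t, F t ∂μ := setLIntegral_le_lintegral _ _
    · refine top_unique ?_
      calc ⊤ = ∫⁻ t in Set.Ioc (0:ℝ) 1, F t ∂μ := by
              rw [← htop]
              refine setLIntegral_congr_fun measurableSet_Ioc ?_
              intro t ht
              rw [hFdef]
              simp only [ne_of_gt ht.1, if_false, one_div]
        _ ≤ ∫⁻ t, F t ∂μ := setLIntegral_le_lintegral _ _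
  -- monotone convergence along x_n = -(1/(n+1))
  have hseq : Tendsto (fun n : ℕ => L (-(1 / (n + 1 : ℝ)))) atTop (𝓝 (∫⁻ t, F t ∂μ)) := by
    refine lintegral_tendsto_of_tendsto_of_monotone
      (fun n => ((hmeas _).ennreal_ofReal).aemeasurable) ?_ ?_
    · filter_upwards [hae] with t ht
      intro m n hmn
      refine ENNReal.ofReal_le_ofReal ?_
      have hm : (0:ℝ) < 1 / (m + 1) := by positivity
      have hn : (0:ℝ) < 1 / (n + 1) := by positivity
      have hle : (1 : ℝ) / (n + 1) ≤ 1 / (m + 1) := by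
        apply one_div_le_one_div_of_le (by positivity)
        exact_mod_cast Nat.add_le_add_right hmn 1
      have h1 : 0 < t - -(1 / (n + 1 : ℝ)) := by linarith
      exact inv_anti₀ h1 (by linarith)
    · filter_upwards [hae] with t ht
      rcases eq_or_lt_of_le ht with heq | hpos
      · -- t = 0 : tends to ⊤
        rw [hFdef]
        simp only [← heq, if_pos rfl]
        have h1 : Tendsto (fun n : ℕ => ((0:ℝ) - -(1 / (n + 1)))⁻¹) atTop atTop := by
          have : (fun n : ℕ => ((0:ℝ) - -(1 / (n + 1)))⁻¹) = fun n : ℕ => (n + 1 : ℝ) := by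
            funext n
            rw [zero_sub, neg_neg, one_div, inv_inv]
          rw [this]
          exact tendsto_atTop_add_const_right _ 1 tendsto_natCast_atTop_atTop
        exact ENNReal.tendsto_ofReal_atTop.comp h1
      · -- t > 0 : tends to ofReal t⁻¹
        rw [hFdef]
        simp only [if_neg (ne_of_gt hpos)]
        refine (ENNReal.continuous_ofReal.tendsto _).comp ?_
        have h1 : Tendsto (fun n : ℕ => t - -(1 / (n + 1 : ℝ))) atTop (𝓝 t) := by
          have h2 : Tendsto (fun n : ℕ => (1 : ℝ) / (n + 1)) atTop (𝓝 0) :=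
            tendsto_one_div_add_atTop_nhds_zero_nat
          have := (tendsto_const_nhds (x := t) (f := atTop (α := ℕ))).add h2
          simpa [sub_neg_eq_add] using this
        have := (continuousAt_inv₀ (ne_of_gt hpos)).tendsto.comp h1
        simpa [Function.comp_def] using this
  rw [hFtop] at hseq
  -- G tends to atBot
  have hgtop : Tendsto g (nhdsWithin 0 (Set.Iio 0)) atTop := by
    rw [tendsto_atTop]
    intro M
    have hev : ∀ᶠ n : ℕ in atTop, ENNReal.ofReal M < L (-(1 / (n + 1 : ℝ))) :=
      hseq.eventually (lt_mem_nhds (ENNReal.ofReal_lt_top))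
    obtain ⟨n, hn⟩ := hev.exists
    set x₀ : ℝ := -(1 / (n + 1 : ℝ)) with hx₀def
    have hx₀ : x₀ < 0 := by rw [hx₀def]; simp; positivity
    have hMg : M ≤ g x₀ := by
      rw [hgL x₀ hx₀]
      calc M ≤ (ENNReal.ofReal M).toReal := by
              rcases le_or_gt 0 M with hM | hM
              · rw [ENNReal.toReal_ofReal hM]
              · rw [ENNReal.ofReal_of_nonpos hM.le]
                simpa using hM.le
        _ ≤ (L x₀).toReal := ENNReal.toReal_mono (hLfin x₀ hx₀) hn.le
    filter_upwards [Ioo_mem_nhdsLT_of_mem (Set.mem_Ioc.mpr ⟨hx₀, le_refl (0:ℝ)⟩)] with x hx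
    exact le_trans hMg (hmono x₀ x hx.1.le hx.2)
  have heq : (fun x : ℝ => ∫ t, (x - t)⁻¹ ∂μ) = fun x => -g x := by
    funext x
    rw [hgdef]
    simp only
    rw [← integral_neg]
    congr 1
    funext t
    rw [show x - t = -(t - x) by ring, inv_neg]
  have h1 : Tendsto (fun x : ℝ => ∫ t, (x - t)⁻¹ ∂μ) (nhdsWithin 0 (Set.Iio 0)) atBot := by
    rw [heq]
    exact tendsto_neg_atBot_iff.mpr hgtop
  refine ⟨h1, ?_⟩
  have h2 : Tendsto (fun x : ℝ => (-(∫ t, (x - t)⁻¹ ∂μ))⁻¹) (nhdsWithin 0 (Set.Iio 0)) (𝓝 0) :=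
    tendsto_inv_atTop_zero.comp (tendsto_neg_atTop_iff.mpr h1)
  have h3 := h2.neg
  simp only [inv_neg, neg_neg, neg_zero] at h3
  exact h3
end

section
/- Let μ be a probability measure on ℝ with μ((−∞, 0)) = 0 and μ({0}) < 1. Then the function ψ(s) = ∫_[0,∞) sx/(1 − sx) dμ(x) is strictly increasing on the negative half-line (−∞, 0); for every s < 0 one has ψ(s) ∈ (μ({0}) − 1, 0); ψ(s) tends to μ({0}) − 1 as s → −∞; and ψ(s) tends to 0 as s tends to 0 from the left. -/
open MeasureTheory Filter ENNReal

private lemma psi_aux_meas (s : ℝ) : Measurable (fun x : ℝ => s * x / (1 - s * x)) :=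
  (measurable_const.mul measurable_id).div
    (measurable_const.sub (measurable_const.mul measurable_id))

theorem psi_transform_properties (μ : Measure ℝ) [IsProbabilityMeasure μ]
    (h : μ (Set.Iio 0) = 0) (h0 : μ {0} < 1) :
    StrictMonoOn (fun s : ℝ => ∫ x, s * x / (1 - s * x) ∂μ) (Set.Iio 0) ∧
    (∀ s < (0 : ℝ), (∫ x, s * x / (1 - s * x) ∂μ) ∈ Set.Ioo ((μ {0}).toReal - 1) 0) ∧
    Tendsto (fun s : ℝ => ∫ x, s * x / (1 - s * x) ∂μ) atBot (nhds ((μ {0}).toReal - 1)) ∧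
    Tendsto (fun s : ℝ => ∫ x, s * x / (1 - s * x) ∂μ) (nhdsWithin 0 (Set.Iio 0)) (nhds 0) := by
  have hx0 : ∀ᵐ x ∂μ, 0 ≤ x := by
    rw [ae_iff]
    have : {a : ℝ | ¬ 0 ≤ a} = Set.Iio 0 := by ext x; simp [not_le]
    rw [this]; exact h
  -- basic pointwise facts
  have key : ∀ s < (0:ℝ), ∀ x : ℝ, 0 ≤ x →
      0 < 1 - s * x ∧ s * x / (1 - s * x) ≤ 0 ∧ -1 < s * x / (1 - s * x) := by
    intro s hs x hx
    have hd : 0 < 1 - s * x := by nlinarith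
    refine ⟨hd, ?_, ?_⟩
    · rw [div_nonpos_iff]; right; constructor <;> nlinarith
    · rw [lt_div_iff₀ hd]; nlinarith
  have hpos : 0 < μ (Set.Ioi 0) := by
    rcases eq_or_ne (μ (Set.Ioi 0)) 0 with hz | hz
    · exfalso
      have huniv : (Set.univ : Set ℝ) = Set.Iic 0 ∪ Set.Ioi 0 := (Set.Iic_union_Ioi).symm
      have hIic : μ (Set.Iic 0) ≤ μ {0} := by
        have hs : Set.Iic (0:ℝ) = Set.Iio 0 ∪ {0} := by
          ext x; simp [le_iff_lt_or_eq]
        rw [hs]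
        calc μ (Set.Iio 0 ∪ {0}) ≤ μ (Set.Iio 0) + μ {0} := measure_union_le _ _
          _ = μ {0} := by rw [h, zero_add]
      have : (1:ℝ≥0∞) ≤ μ {0} := by
        calc (1:ℝ≥0∞) = μ Set.univ := measure_univ.symm
          _ = μ (Set.Iic 0 ∪ Set.Ioi 0) := by rw [← huniv]
          _ ≤ μ (Set.Iic 0) + μ (Set.Ioi 0) := measure_union_le _ _
          _ = μ (Set.Iic 0) := by rw [hz, add_zero]
          _ ≤ μ {0} := hIic
      exact absurd this (not_le.2 h0)
    · exact pos_iff_ne_zero.mpr hz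
  -- integrability
  have hint : ∀ s < (0:ℝ), Integrable (fun x => s * x / (1 - s * x)) μ := by
    intro s hs
    refine Integrable.mono' (integrable_const 1) (psi_aux_meas s).aestronglyMeasurable ?_
    filter_upwards [hx0] with x hx
    have k := key s hs x hx
    rw [Real.norm_eq_abs, abs_le]
    exact ⟨by linarith [k.2.2], by linarith [k.2.1]⟩
  -- strict monotonicity
  have hmono : StrictMonoOn (fun s : ℝ => ∫ x, s * x / (1 - s * x) ∂μ) (Set.Iio 0) := by
    intro s hs t ht hst
    have hd : 0 < ∫ x, (t * x / (1 - t * x) - s * x / (1 - s * x)) ∂μ := by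
      rw [integral_pos_iff_support_of_nonneg_ae]
      · refine lt_of_lt_of_le hpos (measure_mono ?_)
        intro x hx
        have hx' : (0:ℝ) ≤ x := le_of_lt hx
        have k1 := key s hs x hx'
        have k2 := key t ht x hx'
        have hlt : s * x / (1 - s * x) < t * x / (1 - t * x) := by
          rw [div_lt_div_iff₀ k1.1 k2.1]
          nlinarith [mul_pos (sub_pos.2 hst) hx]
        simp only [Function.mem_support]
        intro hc
        rw [sub_eq_zero] at hc
        exact absurd hc (ne_of_gt hlt)
      · filter_upwards [hx0] with x hx
        have k1 := key s hs x hx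
        have k2 := key t ht x hx
        have hle : s * x / (1 - s * x) ≤ t * x / (1 - t * x) := by
          rw [div_le_div_iff₀ k1.1 k2.1]
          nlinarith [mul_nonneg (sub_nonneg.2 hst.le) hx]
        simpa using sub_nonneg.2 hle
      · exact (hint t ht).sub (hint s hs)
    rw [integral_sub (hint t ht) (hint s hs)] at hd
    linarith
  -- the indicator comparison function
  have hintc : Integrable (fun x : ℝ => Set.indicator {(0:ℝ)} (fun _ => (1:ℝ)) x) μ :=
    (integrable_const 1).indicator (measurableSet_singleton 0)
  have hintc' : Integrable (fun x : ℝ => Set.indicator {(0:ℝ)} (fun _ => (1:ℝ)) x - 1) μ :=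
    hintc.sub (integrable_const 1)
  have hcint : ∫ x, (Set.indicator {(0:ℝ)} (fun _ => (1:ℝ)) x - 1) ∂μ = (μ {0}).toReal - 1 := by
    rw [integral_sub hintc (integrable_const 1), integral_indicator_const _ (measurableSet_singleton 0),
      integral_const]
    simp
    rfl
  -- bounds
  have hbounds : ∀ s < (0 : ℝ),
      (∫ x, s * x / (1 - s * x) ∂μ) ∈ Set.Ioo ((μ {0}).toReal - 1) 0 := by
    intro s hs
    constructor
    · -- lower bound
      have hd : 0 < ∫ x, (s * x / (1 - s * x) - (Set.indicator {(0:ℝ)} (fun _ => (1:ℝ)) x - 1)) ∂μ := by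
        rw [integral_pos_iff_support_of_nonneg_ae]
        · refine lt_of_lt_of_le hpos (measure_mono ?_)
          intro x hx
          have hx' : (0:ℝ) ≤ x := le_of_lt hx
          have k := key s hs x hx'
          have hindc : Set.indicator {(0:ℝ)} (fun _ => (1:ℝ)) x = 0 :=
            Set.indicator_of_notMem (by simpa using (ne_of_gt hx)) _
          simp only [Function.mem_support, hindc]
          intro hc
          have : s * x / (1 - s * x) = -1 := by linarith [sub_eq_zero.mp hc]
          nlinarith [k.2.2]
        · filter_upwards [hx0] with x hx
          rcases eq_or_lt_of_le hx with h0x | h0x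
          · simp [← h0x]
          · have k := key s hs x hx
            have hindc : Set.indicator {(0:ℝ)} (fun _ => (1:ℝ)) x = 0 :=
              Set.indicator_of_notMem (by simpa using (ne_of_gt h0x)) _
            simp only [Pi.zero_apply, hindc]
            nlinarith [k.2.2]
        · exact (hint s hs).sub hintc'
      rw [integral_sub (hint s hs) hintc', hcint] at hd
      linarith
    · -- upper bound
      have hd : 0 < ∫ x, (-(s * x / (1 - s * x))) ∂μ := by
        rw [integral_pos_iff_support_of_nonneg_ae]
        · refine lt_of_lt_of_le hpos (measure_mono ?_)
          intro x hx
          have k := key s hs x (le_of_lt hx)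
          have : s * x / (1 - s * x) < 0 :=
            div_neg_of_neg_of_pos (mul_neg_of_neg_of_pos hs hx) k.1
          simp only [Function.mem_support]
          intro hc
          rw [neg_eq_zero] at hc
          exact absurd hc (ne_of_lt this)
        · filter_upwards [hx0] with x hx
          have k := key s hs x hx
          simpa using k.2.1
        · exact (hint s hs).neg
      rw [integral_neg] at hd
      linarith
  refine ⟨hmono, hbounds, ?_, ?_⟩
  · -- limit at -∞
    rw [← hcint]
    refine tendsto_integral_filter_of_dominated_convergence (fun _ => 1) ?_ ?_ (integrable_const 1) ?_
    · exact Eventually.of_forall fun s => (psi_aux_meas s).aestronglyMeasurable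
    · filter_upwards [eventually_lt_atBot (0:ℝ)] with s hs
      filter_upwards [hx0] with x hx
      have k := key s hs x hx
      rw [Real.norm_eq_abs, abs_le]
      exact ⟨by linarith [k.2.2], by linarith [k.2.1]⟩
    · filter_upwards [hx0] with x hx
      rcases eq_or_lt_of_le hx with h0x | h0x
      · simp [← h0x]
      · have hindc : Set.indicator {(0:ℝ)} (fun _ => (1:ℝ)) x = 0 :=
          Set.indicator_of_notMem (by simpa using (ne_of_gt h0x)) _
        rw [hindc]
        have h1 : Tendsto (fun s : ℝ => 1 - s * x) atBot atTop := by
          have := tendsto_id.atBot_mul_const h0x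
          have h2 : Tendsto (fun s : ℝ => -(s * x)) atBot atTop := tendsto_neg_atBot_atTop.comp this
          have := tendsto_atTop_add_const_left atBot (1:ℝ) h2
          simpa [sub_eq_add_neg] using this
        have h2 : Tendsto (fun s : ℝ => (1 - s * x)⁻¹ - 1) atBot (nhds (0 - 1)) :=
          h1.inv_tendsto_atTop.sub tendsto_const_nhds
        have h3 : Tendsto (fun s : ℝ => (1 - s * x)⁻¹ - 1) atBot (nhds (0 - 1 : ℝ)) := h2
        refine Tendsto.congr' ?_ (by simpa using h3)
        filter_upwards [eventually_lt_atBot (0:ℝ)] with s hs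
        have hd : (0:ℝ) < 1 - s * x := (key s hs x hx).1
        field_simp
        ring
  · -- limit at 0⁻
    have main : Tendsto (fun s : ℝ => ∫ x, s * x / (1 - s * x) ∂μ) (nhdsWithin 0 (Set.Iio 0))
        (nhds (∫ _x, (0:ℝ) ∂μ)) := by
      refine tendsto_integral_filter_of_dominated_convergence (fun _ => 1) ?_ ?_ (integrable_const 1) ?_
      · exact Eventually.of_forall fun s => (psi_aux_meas s).aestronglyMeasurable
      · filter_upwards [self_mem_nhdsWithin] with s hs
        filter_upwards [hx0] with x hx
        have k := key s hs x hx
        rw [Real.norm_eq_abs, abs_le]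
        exact ⟨by linarith [k.2.2], by linarith [k.2.1]⟩
      · refine Eventually.of_forall fun x => ?_
        have htend : Tendsto (fun s : ℝ => s * x / (1 - s * x)) (nhds 0) (nhds 0) := by
          have := (tendsto_id.mul_const x).div
            (tendsto_const_nhds.sub (tendsto_id.mul_const x)) (by norm_num : (1:ℝ) - 0 * x ≠ 0)
          simpa [Pi.div_def] using this
        exact htend.mono_left nhdsWithin_le_nhds
    simpa using main
end

section
/- Let μ be a probability measure on ℝ with μ((−∞, 0)) = 0 and μ({0}) < 1. Then the function Ψ_μ(z) = ∫_[0,∞) zx/(1 − zx) dμ(x) is injective on the open left half-plane {z ∈ ℂ : Re z < 0}, and for every z with Re z < 0 the value Ψ_μ(z) lies in the open disk with diameter (μ({0}) − 1, 0), i.e. |Ψ_μ(z) − (μ({0}) − 1)/2| < (1 − μ({0}))/2. -/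
open MeasureTheory

namespace PsiAux

open Complex

lemma re_one_sub (z : ℂ) (x : ℝ) : ((1:ℂ) - z * x).re = 1 - z.re * x := by
  simp [Complex.sub_re, Complex.mul_re]

lemma denom_re_ge {z : ℂ} {x : ℝ} (hx : 0 ≤ x) (hz : z.re < 0) :
    (1:ℝ) ≤ ((1:ℂ) - z * x).re := by
  rw [re_one_sub]
  nlinarith [mul_nonneg hx (neg_nonneg.2 hz.le)]

lemma denom_ne {z : ℂ} {x : ℝ} (hx : 0 ≤ x) (hz : z.re < 0) : (1:ℂ) - z * x ≠ 0 := by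
  intro hc
  have h1 := denom_re_ge hx hz
  rw [hc] at h1
  simp at h1
  linarith

lemma abs_denom_ge_one {z : ℂ} {x : ℝ} (hx : 0 ≤ x) (hz : z.re < 0) :
    (1:ℝ) ≤ ‖(1:ℂ) - z * x‖ := by
  have h1 := denom_re_ge hx hz
  have h2 := Complex.re_le_norm ((1:ℂ) - z * x)
  linarith

lemma abs_denom_ge {z : ℂ} {x : ℝ} (hx : 0 ≤ x) (hz : z.re < 0) :
    x * (-z.re) ≤ ‖(1:ℂ) - z * x‖ := by
  have h2 := Complex.re_le_norm ((1:ℂ) - z * x)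
  rw [re_one_sub] at h2
  nlinarith

lemma abs_f_le_one {z : ℂ} {x : ℝ} (hx : 0 ≤ x) (hz : z.re < 0) :
    ‖z * x / (1 - z * x)‖ ≤ 1 := by
  rw [norm_div]
  apply div_le_one_of_le₀
  · rw [Complex.norm_def, Complex.norm_def]
    apply Real.sqrt_le_sqrt
    simp only [Complex.normSq_apply, Complex.sub_re, Complex.sub_im, Complex.mul_re,
      Complex.mul_im, Complex.one_re, Complex.one_im, Complex.ofReal_re, Complex.ofReal_im,
      mul_zero, zero_mul, sub_zero, add_zero, zero_sub, zero_add]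
    nlinarith [mul_nonneg hx (neg_nonneg.2 hz.le), sq_nonneg (z.im * x)]
  · exact norm_nonneg _

lemma ae_nonneg (μ : Measure ℝ) (h : μ (Set.Iio 0) = 0) : ∀ᵐ x ∂μ, (0:ℝ) ≤ x := by
  rw [ae_iff]
  convert h using 2
  ext x
  simp [not_le]

lemma meas_f (z : ℂ) : Measurable (fun x : ℝ => z * (x:ℂ) / (1 - z * (x:ℂ))) := by fun_prop

lemma integrable_f (μ : Measure ℝ) [IsProbabilityMeasure μ] (h : μ (Set.Iio 0) = 0)
    {z : ℂ} (hz : z.re < 0) :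
    Integrable (fun x : ℝ => z * (x:ℂ) / (1 - z * (x:ℂ))) μ := by
  apply Integrable.mono' (integrable_const (1:ℝ)) (meas_f z).aestronglyMeasurable
  filter_upwards [ae_nonneg μ h] with x hx
  simpa using abs_f_le_one hx hz

lemma integrable_I (μ : Measure ℝ) [IsProbabilityMeasure μ] (h : μ (Set.Iio 0) = 0)
    {z₁ z₂ : ℂ} (h₁ : z₁.re < 0) (h₂ : z₂.re < 0) :
    Integrable (fun x : ℝ => (x:ℂ) / ((1 - z₁ * x) * (1 - z₂ * x))) μ := by
  apply Integrable.mono' (integrable_const ((-z₁.re)⁻¹))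
    ((Complex.measurable_ofReal.div (by fun_prop)).aestronglyMeasurable)
  filter_upwards [ae_nonneg μ h] with x hx
  show ‖(x:ℂ) / ((1 - z₁ * x) * (1 - z₂ * x))‖ ≤ _
  rw [norm_div, norm_mul]
  rcases eq_or_lt_of_le hx with rfl | hx'
  · simp [inv_nonneg.2 (neg_nonneg.2 h₁.le), h₁.le]
  · have hd1 : x * (-z₁.re) ≤ ‖1 - z₁ * x‖ := abs_denom_ge hx h₁
    have hd2 : (1:ℝ) ≤ ‖1 - z₂ * x‖ := abs_denom_ge_one hx h₂
    have hp1 : (0:ℝ) < x * (-z₁.re) := mul_pos hx' (neg_pos.2 h₁)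
    have habs : ‖((x:ℝ):ℂ)‖ = x := by
      rw [Complex.norm_real, Real.norm_eq_abs, _root_.abs_of_nonneg hx]
    rw [habs]
    calc x / (‖1 - z₁ * x‖ * ‖1 - z₂ * x‖)
        ≤ x / (x * (-z₁.re) * 1) := by
          apply div_le_div_of_nonneg_left hx (by linarith)
          exact mul_le_mul hd1 hd2 zero_le_one (norm_nonneg _)
      _ = (-z₁.re)⁻¹ := by
          rw [mul_one, inv_eq_one_div, div_eq_div_iff (by nlinarith) (by linarith)]
          ring

lemma Ioi_pos (μ : Measure ℝ) [IsProbabilityMeasure μ] (h : μ (Set.Iio 0) = 0)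
    (h0 : μ {0} < 1) : 0 < μ (Set.Ioi 0) := by
  have hIci : μ (Set.Ici (0:ℝ)) = 1 := by
    have hc : Set.Ici (0:ℝ) = (Set.Iio 0)ᶜ := (Set.compl_Iio).symm
    rw [hc, prob_compl_eq_one_sub measurableSet_Iio, h, tsub_zero]
  have hsplit : (1:ENNReal) ≤ μ {0} + μ (Set.Ioi 0) := by
    rw [← hIci, show Set.Ici (0:ℝ) = {0} ∪ Set.Ioi 0 from by
      ext y; simp [le_iff_lt_or_eq, or_comm, eq_comm]]
    exact measure_union_le _ _
  by_contra hcon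
  push_neg at hcon
  have hz : μ (Set.Ioi 0) = 0 := le_antisymm hcon zero_le
  rw [hz, add_zero] at hsplit
  exact absurd h0 (not_lt.2 hsplit)

lemma integrable_J (μ : Measure ℝ) [IsProbabilityMeasure μ] (h : μ (Set.Iio 0) = 0)
    {z : ℂ} (hz : z.re < 0) :
    Integrable (fun x : ℝ => x / Complex.normSq (1 - z * x)) μ := by
  apply Integrable.mono' (integrable_const ((-z.re)⁻¹))
  · exact (measurable_id.div (Complex.continuous_normSq.measurable.comp
      (by fun_prop))).aestronglyMeasurable
  · filter_upwards [ae_nonneg μ h] with x hx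
    have hnsq : (0:ℝ) ≤ Complex.normSq (1 - z * x) := Complex.normSq_nonneg _
    rw [Real.norm_eq_abs, _root_.abs_of_nonneg (div_nonneg hx hnsq)]
    rcases eq_or_lt_of_le hx with rfl | hx'
    · simp [inv_nonneg.2 (neg_nonneg.2 hz.le), hz.le]
    · have key : x * (-z.re) ≤ Complex.normSq (1 - z * x) := by
        have h1 := denom_re_ge hx hz
        rw [Complex.normSq_apply, re_one_sub]
        nlinarith [sq_nonneg ((1:ℂ) - z*x).im, mul_nonneg hx (neg_nonneg.2 hz.le)]
      rw [div_le_iff₀ (lt_of_lt_of_le (mul_pos hx' (neg_pos.2 hz)) key)]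
      rw [inv_mul_eq_div, le_div_iff₀ (neg_pos.2 hz)]
      nlinarith

lemma J_pos (μ : Measure ℝ) [IsProbabilityMeasure μ] (h : μ (Set.Iio 0) = 0)
    (h0 : μ {0} < 1) {z : ℂ} (hz : z.re < 0) :
    0 < ∫ x, x / Complex.normSq (1 - z * x) ∂μ := by
  rw [integral_pos_iff_support_of_nonneg_ae ?_ (integrable_J μ h hz)]
  · apply lt_of_lt_of_le (Ioi_pos μ h h0)
    apply measure_mono
    intro x hx
    have hx' : (0:ℝ) < x := hx
    have hd : (1:ℂ) - z * x ≠ 0 := denom_ne hx'.le hz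
    have hn : 0 < Complex.normSq (1 - z * x) := Complex.normSq_pos.2 hd
    exact (div_pos hx' hn).ne'
  · filter_upwards [ae_nonneg μ h] with x hx
    exact div_nonneg hx (Complex.normSq_nonneg _)

lemma im_f (z : ℂ) (x : ℝ) :
    (z * x / (1 - z * x)).im = z.im * (x / Complex.normSq (1 - z * x)) := by
  rw [Complex.div_im, div_sub_div_same, mul_div_assoc'] -- maybe
  congr 1
  simp only [Complex.mul_im, Complex.mul_re, Complex.sub_re, Complex.sub_im, Complex.one_re,
    Complex.one_im, Complex.ofReal_re, Complex.ofReal_im]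
  ring

lemma im_psi (μ : Measure ℝ) [IsProbabilityMeasure μ] (h : μ (Set.Iio 0) = 0)
    {z : ℂ} (hz : z.re < 0) :
    (∫ x, z * (x:ℂ) / (1 - z * (x:ℂ)) ∂μ).im
      = z.im * ∫ x, x / Complex.normSq (1 - z * x) ∂μ := by
  rw [show (∫ x, z * (x:ℂ) / (1 - z * (x:ℂ)) ∂μ).im
      = RCLike.im (∫ x, z * (x:ℂ) / (1 - z * (x:ℂ)) ∂μ) from RCLike.im_to_complex.symm]
  rw [← integral_im (integrable_f μ h hz)]
  rw [← MeasureTheory.integral_const_mul]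
  apply integral_congr_ae
  filter_upwards with x
  simpa [RCLike.im_to_complex] using im_f z x

lemma D_ne {z₁ z₂ : ℂ} {x : ℝ} (hx : 0 ≤ x) (h₁ : z₁.re < 0) (h₂ : z₂.re < 0) :
    ((1:ℂ) - z₁ * x) * (1 - z₂ * x) ≠ 0 :=
  mul_ne_zero (denom_ne hx h₁) (denom_ne hx h₂)

lemma im_point {z₁ z₂ : ℂ} {x : ℝ} (hx : 0 < x) (h₁ : z₁.re < 0) (h₂ : z₂.re < 0)
    (hi₁ : 0 < z₁.im) (hi₂ : 0 < z₂.im) :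
    0 < ((x:ℂ) / ((1 - z₁ * x) * (1 - z₂ * x))).im := by
  have hnsq : 0 < Complex.normSq ((1 - z₁ * (x:ℂ)) * (1 - z₂ * x)) :=
    Complex.normSq_pos.2 (D_ne hx.le h₁ h₂)
  have hr1 : (1:ℝ) ≤ ((1:ℂ) - z₁ * x).re := denom_re_ge hx.le h₁
  have hr2 : (1:ℝ) ≤ ((1:ℂ) - z₂ * x).re := denom_re_ge hx.le h₂
  rw [Complex.div_im]
  simp only [Complex.ofReal_re, Complex.ofReal_im, Complex.mul_im, Complex.mul_re,
    Complex.sub_re, Complex.sub_im, Complex.one_re, Complex.one_im, zero_mul, mul_zero,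
    sub_zero, zero_sub, add_zero, zero_add, zero_div]
  rw [neg_pos]
  apply div_neg_of_neg_of_pos _ hnsq
  have e1 : (1:ℝ) ≤ 1 - z₁.re * x := by nlinarith [mul_nonneg hx.le (neg_nonneg.2 h₁.le)]
  have e2 : (1:ℝ) ≤ 1 - z₂.re * x := by nlinarith [mul_nonneg hx.le (neg_nonneg.2 h₂.le)]
  have p1 : 0 < z₁.im * x := mul_pos hi₁ hx
  have p2 : 0 < z₂.im * x := mul_pos hi₂ hx
  nlinarith [mul_pos hx p1, mul_pos hx p2, mul_le_mul e2 (le_refl (z₁.im * x)) p1.le (by linarith : (0:ℝ) ≤ 1 - z₂.re * x), mul_le_mul e1 (le_refl (z₂.im * x)) p2.le (by linarith : (0:ℝ) ≤ 1 - z₁.re * x)]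

lemma re_point {z₁ z₂ : ℂ} {x : ℝ} (hx : 0 < x) (h₁ : z₁.re < 0) (h₂ : z₂.re < 0)
    (hi₁ : z₁.im = 0) (hi₂ : z₂.im = 0) :
    0 < ((x:ℂ) / ((1 - z₁ * x) * (1 - z₂ * x))).re := by
  have hnsq : 0 < Complex.normSq ((1 - z₁ * (x:ℂ)) * (1 - z₂ * x)) :=
    Complex.normSq_pos.2 (D_ne hx.le h₁ h₂)
  rw [Complex.div_re]
  simp only [Complex.ofReal_re, Complex.ofReal_im, Complex.mul_im, Complex.mul_re,
    Complex.sub_re, Complex.sub_im, Complex.one_re, Complex.one_im, zero_mul, mul_zero,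
    sub_zero, zero_sub, add_zero, zero_add, zero_div, hi₁, hi₂, neg_zero, mul_neg]
  have e1 : (1:ℝ) ≤ 1 - z₁.re * x := by nlinarith [mul_nonneg hx.le (neg_nonneg.2 h₁.le)]
  have e2 : (1:ℝ) ≤ 1 - z₂.re * x := by nlinarith [mul_nonneg hx.le (neg_nonneg.2 h₂.le)]
  apply div_pos _ hnsq
  exact mul_pos hx (mul_pos (lt_of_lt_of_le zero_lt_one e1) (lt_of_lt_of_le zero_lt_one e2))

lemma point_zero (z₁ z₂ : ℂ) : ((0:ℝ):ℂ) / ((1 - z₁ * ((0:ℝ):ℂ)) * (1 - z₂ * ((0:ℝ):ℂ))) = 0 := by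
  simp

lemma imI_pos (μ : Measure ℝ) [IsProbabilityMeasure μ] (h : μ (Set.Iio 0) = 0)
    (h0 : μ {0} < 1) {z₁ z₂ : ℂ} (h₁ : z₁.re < 0) (h₂ : z₂.re < 0)
    (hi₁ : 0 < z₁.im) (hi₂ : 0 < z₂.im) :
    0 < (∫ x, (x:ℂ) / ((1 - z₁ * x) * (1 - z₂ * x)) ∂μ).im := by
  have hI := integrable_I μ h h₁ h₂
  have hII := hI.im
  have heq := integral_im (μ := μ) hI
  simp only [RCLike.im_to_complex] at hII heq
  rw [← heq]
  rw [integral_pos_iff_support_of_nonneg_ae ?_ hII]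
  · apply lt_of_lt_of_le (Ioi_pos μ h h0)
    apply measure_mono
    intro x hx
    exact (im_point hx h₁ h₂ hi₁ hi₂).ne'
  · filter_upwards [ae_nonneg μ h] with x hx
    rcases eq_or_lt_of_le hx with rfl | hx'
    · rw [point_zero]; simp
    · exact (im_point hx' h₁ h₂ hi₁ hi₂).le

lemma reI_pos (μ : Measure ℝ) [IsProbabilityMeasure μ] (h : μ (Set.Iio 0) = 0)
    (h0 : μ {0} < 1) {z₁ z₂ : ℂ} (h₁ : z₁.re < 0) (h₂ : z₂.re < 0)
    (hi₁ : z₁.im = 0) (hi₂ : z₂.im = 0) :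
    0 < (∫ x, (x:ℂ) / ((1 - z₁ * x) * (1 - z₂ * x)) ∂μ).re := by
  have hI := integrable_I μ h h₁ h₂
  have hII := hI.re
  have heq := integral_re (μ := μ) hI
  simp only [RCLike.re_to_complex] at hII heq
  rw [← heq]
  rw [integral_pos_iff_support_of_nonneg_ae ?_ hII]
  · apply lt_of_lt_of_le (Ioi_pos μ h h0)
    apply measure_mono
    intro x hx
    exact (re_point hx h₁ h₂ hi₁ hi₂).ne'
  · filter_upwards [ae_nonneg μ h] with x hx
    rcases eq_or_lt_of_le hx with rfl | hx'
    · rw [point_zero]; simp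
    · exact (re_point hx' h₁ h₂ hi₁ hi₂).le

lemma I_conj (μ : Measure ℝ) (z₁ z₂ : ℂ) :
    (∫ x, (x:ℂ) / ((1 - (starRingEnd ℂ) z₁ * x) * (1 - (starRingEnd ℂ) z₂ * x)) ∂μ)
      = (starRingEnd ℂ) (∫ x, (x:ℂ) / ((1 - z₁ * x) * (1 - z₂ * x)) ∂μ) := by
  rw [← integral_conj]
  apply integral_congr_ae
  filter_upwards with x
  simp [map_div₀, map_mul, map_sub, Complex.conj_ofReal]

lemma psi_diff (μ : Measure ℝ) [IsProbabilityMeasure μ] (h : μ (Set.Iio 0) = 0)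
    {z₁ z₂ : ℂ} (h₁ : z₁.re < 0) (h₂ : z₂.re < 0) :
    (∫ x, z₁ * (x:ℂ) / (1 - z₁ * x) ∂μ) - (∫ x, z₂ * (x:ℂ) / (1 - z₂ * x) ∂μ)
      = (z₁ - z₂) * ∫ x, (x:ℂ) / ((1 - z₁ * x) * (1 - z₂ * x)) ∂μ := by
  rw [← MeasureTheory.integral_const_mul, ← integral_sub (integrable_f μ h h₁) (integrable_f μ h h₂)]
  apply integral_congr_ae
  filter_upwards [ae_nonneg μ h] with x hx
  have d1 := denom_ne hx h₁
  have d2 := denom_ne hx h₂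
  rw [div_sub_div _ _ d1 d2, ← mul_div_assoc]
  congr 1
  ring

end PsiAux

theorem psi_transform_univalent (μ : Measure ℝ) [IsProbabilityMeasure μ]
    (h : μ (Set.Iio 0) = 0) (h0 : μ {0} < 1) :
    Set.InjOn (fun z : ℂ => ∫ x, z * (x : ℂ) / (1 - z * (x : ℂ)) ∂μ) {z : ℂ | z.re < 0} ∧
    ∀ z : ℂ, z.re < 0 →
      ‖(∫ x, z * (x : ℂ) / (1 - z * (x : ℂ)) ∂μ) -
          ((((μ {0}).toReal - 1) / 2 : ℝ) : ℂ)‖ < (1 - (μ {0}).toReal) / 2 := by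
  constructor
  · intro z₁ hz₁ z₂ hz₂ heq
    simp only [Set.mem_setOf_eq] at hz₁ hz₂
    simp only at heq
    by_contra hne
    have hdiff := PsiAux.psi_diff μ h hz₁ hz₂
    rw [heq, sub_self] at hdiff
    have hI0 : (∫ x, (x:ℂ) / ((1 - z₁ * x) * (1 - z₂ * x)) ∂μ) = 0 := by
      rcases mul_eq_zero.1 hdiff.symm with hc | hc
      · exact absurd (sub_eq_zero.1 hc) hne
      · exact hc
    have hJ₁ := PsiAux.J_pos μ h h0 hz₁
    have hJ₂ := PsiAux.J_pos μ h h0 hz₂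
    have him : z₁.im * ∫ x, x / Complex.normSq (1 - z₁ * x) ∂μ
        = z₂.im * ∫ x, x / Complex.normSq (1 - z₂ * x) ∂μ := by
      rw [← PsiAux.im_psi μ h hz₁, ← PsiAux.im_psi μ h hz₂, heq]
    rcases lt_trichotomy z₁.im 0 with hs | hs | hs
    · have hs₂ : z₂.im < 0 := by
        by_contra hc
        push_neg at hc
        nlinarith [mul_neg_of_neg_of_pos hs hJ₁, mul_nonneg hc hJ₂.le]
      have hpos := PsiAux.imI_pos μ h h0 (z₁ := (starRingEnd ℂ) z₁) (z₂ := (starRingEnd ℂ) z₂)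
        (by simpa using hz₁) (by simpa using hz₂)
        (by simpa using neg_pos.2 hs) (by simpa using neg_pos.2 hs₂)
      rw [PsiAux.I_conj, hI0] at hpos
      simp at hpos
    · have hs₂ : z₂.im = 0 := by
        rw [hs, zero_mul] at him
        rcases mul_eq_zero.1 him.symm with hc | hc
        · exact hc
        · exact absurd hc hJ₂.ne'
      have hpos := PsiAux.reI_pos μ h h0 hz₁ hz₂ hs hs₂
      rw [hI0] at hpos
      simp at hpos
    · have hs₂ : 0 < z₂.im := by
        by_contra hc
        push_neg at hc
        nlinarith [mul_pos hs hJ₁, mul_nonpos_of_nonpos_of_nonneg hc hJ₂.le]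
      have hpos := PsiAux.imI_pos μ h h0 hz₁ hz₂ hs hs₂
      rw [hI0] at hpos
      simp at hpos
  · intro z hz
    set a : ℝ := (μ {0}).toReal with ha
    have hf := PsiAux.integrable_f μ h hz
    set g : ℝ → ℂ := fun x => z * x / (1 - z * x) + (1/2 : ℂ) with hg
    have hgint : Integrable g μ := hf.add (integrable_const _)
    have h0m : MeasurableSet ({0} : Set ℝ) := measurableSet_singleton 0
    have hsing : ∫ x in ({0} : Set ℝ), g x ∂μ = a • (1/2 : ℂ) := by
      have heqon : Set.EqOn g (fun _ => (1/2:ℂ)) {0} := by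
        intro x hx
        simp only [Set.mem_singleton_iff] at hx
        simp [hg, hx]
      rw [setIntegral_congr_fun h0m heqon, setIntegral_const, Measure.real]
    have htot : ∫ x, g x ∂μ = (∫ x, z * (x:ℂ) / (1 - z * x) ∂μ) + 1/2 := by
      rw [hg]
      rw [integral_add hf (integrable_const _), integral_const]
      simp
    have hsplit := integral_add_compl h0m hgint
    rw [hsing, htot] at hsplit
    have hcompl : ∫ x in ({0}ᶜ : Set ℝ), g x ∂μ
        = (∫ x, z * (x:ℂ) / (1 - z * x) ∂μ) + 1/2 - a • (1/2 : ℂ) :=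
      eq_sub_of_add_eq' hsplit
    have key : (∫ x, z * (x:ℂ) / (1 - z * x) ∂μ) - (((a - 1)/2 : ℝ) : ℂ)
        = ∫ x in ({0}ᶜ : Set ℝ), g x ∂μ := by
      rw [hcompl, Complex.real_smul]
      push_cast
      ring
    rw [key]
    have hνuniv : μ ({0}ᶜ : Set ℝ) = 1 - μ {0} := prob_compl_eq_one_sub h0m
    have hνreal : (μ ({0}ᶜ : Set ℝ)).toReal = 1 - a := by
      rw [hνuniv, ENNReal.toReal_sub_of_le h0.le ENNReal.one_ne_top, ENNReal.toReal_one]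
    have hgν : Integrable g (μ.restrict ({0}ᶜ : Set ℝ)) := hgint.restrict
    have hnormint : Integrable (fun x => ‖g x‖) (μ.restrict ({0}ᶜ : Set ℝ)) := by
      simpa using hgν.norm
    have hlt : ∀ x : ℝ, 0 < x → ‖g x‖ < 1/2 := by
      intro x hx
      have d := PsiAux.denom_ne hx.le hz
      have hrw : g x = (1 + z * x) / (2 * (1 - z * x)) := by
        rw [hg]
        field_simp
        ring
      rw [hrw, norm_div, norm_mul, Complex.norm_two]
      rw [div_lt_iff₀ (mul_pos two_pos (norm_pos_iff.2 d)), one_div, inv_mul_eq_div, lt_div_iff₀ two_pos]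
      have habslt : ‖1 + z * x‖ < ‖1 - z * x‖ := by
        rw [Complex.norm_def, Complex.norm_def]
        apply Real.sqrt_lt_sqrt (Complex.normSq_nonneg _)
        simp only [Complex.normSq_apply, Complex.add_re, Complex.add_im, Complex.sub_re,
          Complex.sub_im, Complex.mul_re, Complex.mul_im, Complex.one_re, Complex.one_im,
          Complex.ofReal_re, Complex.ofReal_im, mul_zero, zero_mul, sub_zero, add_zero,
          zero_add, zero_sub]
        nlinarith [mul_pos hx (neg_pos.2 hz)]
      nlinarith [norm_nonneg (1 + z * x)]
    have haeν_pos : ∀ᵐ x ∂(μ.restrict ({0}ᶜ : Set ℝ)), 0 < x := by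
      filter_upwards [ae_restrict_of_ae (PsiAux.ae_nonneg μ h), ae_restrict_mem h0m.compl]
        with x hx1 hx2
      have hne0 : x ≠ 0 := by simpa using hx2
      exact lt_of_le_of_ne hx1 (Ne.symm hne0)
    have hintF : Integrable (fun x => 1/2 - ‖g x‖) (μ.restrict ({0}ᶜ : Set ℝ)) :=
      (integrable_const _).sub hnormint
    have hpos : 0 < ∫ x, (1/2 - ‖g x‖) ∂(μ.restrict ({0}ᶜ : Set ℝ)) := by
      rw [integral_pos_iff_support_of_nonneg_ae ?_ hintF]
      · set F : ℝ → ℝ := fun x => 1/2 - ‖g x‖ with hF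
        have haeF : ∀ᵐ x ∂(μ.restrict ({0}ᶜ : Set ℝ)), 0 < F x := by
          filter_upwards [haeν_pos] with x hx
          simpa [hF, sub_pos] using hlt x hx
        have hnull : (μ.restrict ({0}ᶜ : Set ℝ)) (Function.support F)ᶜ = 0 := by
          apply measure_mono_null ?_ (ae_iff.1 haeF)
          intro x hx
          simp only [Set.mem_compl_iff, Function.mem_support, not_not] at hx
          simp [Set.mem_setOf_eq, hx]
        have huniv : 0 < (μ.restrict ({0}ᶜ : Set ℝ)) Set.univ := by
          rw [Measure.restrict_apply_univ, hνuniv]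
          exact tsub_pos_of_lt h0
        calc (0:ENNReal) < (μ.restrict ({0}ᶜ : Set ℝ)) Set.univ := huniv
          _ ≤ (μ.restrict ({0}ᶜ : Set ℝ)) (Function.support F)
              + (μ.restrict ({0}ᶜ : Set ℝ)) (Function.support F)ᶜ := by
              rw [← Set.union_compl_self (Function.support F)]
              exact measure_union_le _ _
          _ = (μ.restrict ({0}ᶜ : Set ℝ)) (Function.support F) := by rw [hnull, add_zero]
      · filter_upwards [haeν_pos] with x hx
        have := hlt x hx
        simp only [Pi.zero_apply]
        linarith
    have heq2 : ∫ x, (1/2 - ‖g x‖) ∂(μ.restrict ({0}ᶜ : Set ℝ))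
        = (1 - a)/2 - ∫ x, ‖g x‖ ∂(μ.restrict ({0}ᶜ : Set ℝ)) := by
      rw [integral_sub (integrable_const _) hnormint, integral_const, Measure.real,
        Measure.restrict_apply_univ, hνreal, smul_eq_mul]
      ring
    have hintlt : ∫ x, ‖g x‖ ∂(μ.restrict ({0}ᶜ : Set ℝ)) < (1 - a)/2 := by
      rw [heq2] at hpos
      linarith
    calc ‖∫ x in ({0}ᶜ : Set ℝ), g x ∂μ‖
        ≤ ∫ x, ‖g x‖ ∂(μ.restrict ({0}ᶜ : Set ℝ)) := by
          simpa using
            norm_integral_le_integral_norm (μ := μ.restrict ({0}ᶜ : Set ℝ)) g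
      _ < (1 - a)/2 := hintlt
end

section
/- Boolean convolution preserves positive support: let μ and ν be probability measures on ℝ with μ((−∞, 0)) = 0 and ν((−∞, 0)) = 0, and let ρ be a probability measure on ℝ such that for all z ∈ ℂ with Im z > 0, F_ρ(z) = F_μ(z) + F_ν(z) − z, where F_λ(z) = ( ∫ (z − t)⁻¹ dλ(t) )⁻¹ denotes the reciprocal Cauchy transform. Then ρ((−∞, 0)) = 0. -/
open MeasureTheory Complex

lemma ae_nn (μ : Measure ℝ) (hμ : μ (Set.Iio 0) = 0) : ∀ᵐ t : ℝ ∂μ, 0 ≤ t := by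
  rw [ae_iff]
  convert hμ using 2
  ext t
  simp [not_le]

section pt
variable (z : ℂ) (hz : 0 < z.im)

include hz

lemma znz (t : ℝ) : z - t ≠ 0 := by
  intro h
  have h2 := congrArg Complex.im h
  simp only [sub_im, ofReal_im, sub_zero, zero_im] at h2
  linarith

lemma hcont : Continuous fun t : ℝ => (z - t)⁻¹ := by
  apply Continuous.inv₀ (by fun_prop)
  exact fun t => znz z hz t

lemma hbound (t : ℝ) : ‖(z - t)⁻¹‖ ≤ z.im⁻¹ := by
  rw [norm_inv]
  apply inv_anti₀ hz
  calc z.im = |(z - t).im| := by simp [abs_of_pos hz]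
    _ ≤ ‖z - t‖ := Complex.abs_im_le_norm _
    _ = ‖z - t‖ := rfl

lemma hint (μ : Measure ℝ) [IsProbabilityMeasure μ] :
    Integrable (fun t : ℝ => (z - t)⁻¹) μ := by
  refine (integrable_const (z.im⁻¹)).mono' ((hcont z hz).aestronglyMeasurable) ?_
  exact Filter.Eventually.of_forall (hbound z hz)

omit hz in
lemma Dpos (t : ℝ) (hz : z.im ≠ 0) : 0 < (z.re - t)^2 + z.im^2 := by positivity

omit hz in
lemma normSq_zsub (t : ℝ) : Complex.normSq (z - t) = (z.re - t)^2 + z.im^2 := by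
  simp [Complex.normSq_apply]; ring

lemma hintD (μ : Measure ℝ) [IsProbabilityMeasure μ] :
    Integrable (fun t : ℝ => ((z.re - t)^2 + z.im^2)⁻¹) μ := by
  refine (integrable_const ((z.im^2)⁻¹)).mono' ?_ ?_
  · apply Continuous.aestronglyMeasurable
    apply Continuous.inv₀ (by fun_prop)
    exact fun t => (Dpos z t hz.ne').ne'
  · refine Filter.Eventually.of_forall fun t => ?_
    rw [Real.norm_eq_abs, abs_of_pos (by positivity)]
    apply inv_anti₀ (by positivity)
    nlinarith [sq_nonneg (z.re - t)]

lemma Ipos (μ : Measure ℝ) [IsProbabilityMeasure μ] :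
    0 < ∫ t, ((z.re - t)^2 + z.im^2)⁻¹ ∂μ := by
  rw [integral_pos_iff_support_of_nonneg
      (fun t => le_of_lt (inv_pos.mpr (Dpos z t hz.ne'))) (hintD z hz μ)]
  have : Function.support (fun t : ℝ => ((z.re - t)^2 + z.im^2)⁻¹) = Set.univ := by
    ext t; simp [Function.mem_support, (Dpos z t hz.ne').ne']
  rw [this]
  simp

lemma G_im (μ : Measure ℝ) [IsProbabilityMeasure μ] :
    (∫ t : ℝ, (z - t)⁻¹ ∂μ).im = -z.im * ∫ t, ((z.re - t)^2 + z.im^2)⁻¹ ∂μ := by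
  have h1 := integral_im (𝕜 := ℂ) (hint z hz μ)
  simp only [RCLike.im_to_complex] at h1
  rw [← h1, ← integral_const_mul]
  congr 1; ext t
  rw [Complex.inv_im, normSq_zsub]
  simp only [sub_im, ofReal_im, sub_zero]
  ring

lemma G_re (μ : Measure ℝ) [IsProbabilityMeasure μ] :
    (∫ t : ℝ, (z - t)⁻¹ ∂μ).re = ∫ t, (z.re - t) * ((z.re - t)^2 + z.im^2)⁻¹ ∂μ := by
  have h1 := integral_re (𝕜 := ℂ) (hint z hz μ)
  simp only [RCLike.re_to_complex] at h1
  rw [← h1]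
  congr 1; ext t
  rw [Complex.inv_re, normSq_zsub]
  simp only [sub_re, ofReal_re]
  ring

lemma hint_re_repr (μ : Measure ℝ) [IsProbabilityMeasure μ] :
    Integrable (fun t : ℝ => (z.re - t) * ((z.re - t)^2 + z.im^2)⁻¹) μ := by
  have := (hint z hz μ).re
  apply this.congr
  refine Filter.Eventually.of_forall fun t => ?_
  simp only [RCLike.re_to_complex]
  rw [Complex.inv_re, normSq_zsub]
  simp only [sub_re, ofReal_re]
  ring

lemma G_re_le (μ : Measure ℝ) [IsProbabilityMeasure μ] (hμ : μ (Set.Iio 0) = 0) :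
    (∫ t : ℝ, (z - t)⁻¹ ∂μ).re ≤ z.re * ∫ t, ((z.re - t)^2 + z.im^2)⁻¹ ∂μ := by
  rw [G_re z hz μ, ← integral_const_mul]
  apply integral_mono_ae (hint_re_repr z hz μ) ((hintD z hz μ).const_mul _)
  filter_upwards [ae_nn μ hμ] with t ht
  have hD := Dpos z t hz.ne'
  have : z.re - t ≤ z.re := by linarith
  nlinarith [inv_pos.mpr hD]

lemma norm_int_sq_le (μ : Measure ℝ) [IsProbabilityMeasure μ] :
    (∫ t : ℝ, ‖(z - t)⁻¹‖ ∂μ)^2 ≤ ∫ t, ((z.re - t)^2 + z.im^2)⁻¹ ∂μ := by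
  have hm : MemLp (fun t : ℝ => ‖(z - t)⁻¹‖) 2 μ :=
    MemLp.of_bound (hint z hz μ).norm.aestronglyMeasurable _
      (Filter.Eventually.of_forall fun t => by rw [norm_norm]; exact hbound z hz t)
  have hv := ProbabilityTheory.variance_nonneg (fun t : ℝ => ‖(z - t)⁻¹‖) μ
  rw [ProbabilityTheory.variance_eq_sub hm] at hv
  have heq : ∫ t, ((fun t : ℝ => ‖(z - t)⁻¹‖)^2) t ∂μ
      = ∫ t, ((z.re - t)^2 + z.im^2)⁻¹ ∂μ := by
    congr 1; ext t
    simp only [Pi.pow_apply]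
    rw [show ‖(z - (t:ℝ))⁻¹‖ = ‖((z - t)⁻¹)‖ from rfl, Complex.sq_norm,
      map_inv₀, normSq_zsub]
  rw [heq] at hv
  linarith

lemma normSq_G_le (μ : Measure ℝ) [IsProbabilityMeasure μ] :
    Complex.normSq (∫ t : ℝ, (z - t)⁻¹ ∂μ) ≤ ∫ t, ((z.re - t)^2 + z.im^2)⁻¹ ∂μ := by
  have h1 : ‖∫ t : ℝ, (z - t)⁻¹ ∂μ‖ ≤ ∫ t : ℝ, ‖(z - t)⁻¹‖ ∂μ :=
    norm_integral_le_integral_norm _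
  have h2 := norm_int_sq_le z hz μ
  rw [Complex.normSq_eq_norm_sq]
  have h3 : (0:ℝ) ≤ ‖∫ t : ℝ, (z - t)⁻¹ ∂μ‖ := norm_nonneg _
  nlinarith

end pt

section pt2
variable (z : ℂ) (hz : 0 < z.im)

include hz

lemma I_low (μ : Measure ℝ) [IsProbabilityMeasure μ] (hre : z.re < 0) (him1 : z.im ≤ 1)
    (T : ℝ) (hT : 0 ≤ T) (hμT : (1:ℝ)/2 ≤ (μ (Set.Icc 0 T)).toReal) :
    (2 * ((T - z.re)^2 + 1))⁻¹ ≤ ∫ t, ((z.re - t)^2 + z.im^2)⁻¹ ∂μ := by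
  set M : ℝ := (T - z.re)^2 + 1 with hMdef
  have hMpos : (0:ℝ) < M := by positivity
  have step1 : M⁻¹ * (μ (Set.Icc 0 T)).toReal
      ≤ ∫ t in Set.Icc 0 T, ((z.re - t)^2 + z.im^2)⁻¹ ∂μ := by
    rw [← measureReal_def]
    apply setIntegral_ge_of_const_le_real measurableSet_Icc (measure_ne_top μ _)
    · intro t ht
      apply inv_anti₀ (Dpos z t hz.ne')
      have h1 : 0 ≤ t := ht.1
      have h2 : t ≤ T := ht.2
      rw [hMdef]
      nlinarith
    · exact (hintD z hz μ).integrableOn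
  have step2 : ∫ t in Set.Icc 0 T, ((z.re - t)^2 + z.im^2)⁻¹ ∂μ
      ≤ ∫ t, ((z.re - t)^2 + z.im^2)⁻¹ ∂μ :=
    setIntegral_le_integral (hintD z hz μ)
      (Filter.Eventually.of_forall fun t => le_of_lt (inv_pos.mpr (Dpos z t hz.ne')))
  have : (2*M)⁻¹ ≤ M⁻¹ * (μ (Set.Icc 0 T)).toReal := by
    rw [show (2*M)⁻¹ = M⁻¹ * (1/2) by rw [mul_comm]; field_simp]
    exact mul_le_mul_of_nonneg_left hμT (inv_nonneg.mpr hMpos.le)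
  linarith

omit hz in
lemma exists_T (μ : Measure ℝ) [IsProbabilityMeasure μ] (hμ : μ (Set.Iio 0) = 0) :
    ∃ T : ℝ, 0 ≤ T ∧ (1:ℝ)/2 ≤ (μ (Set.Icc 0 T)).toReal := by
  have h1 : μ (Set.Ici (0:ℝ)) = 1 := by
    have hc := measure_add_measure_compl (μ := μ) (measurableSet_Ici (a := (0:ℝ)))
    rw [show (Set.Ici (0:ℝ))ᶜ = Set.Iio 0 by simp, hμ, add_zero] at hc
    simpa using hc
  have h2 : Set.Ici (0:ℝ) = ⋃ n : ℕ, Set.Icc (0:ℝ) n := by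
    ext x
    simp only [Set.mem_Ici, Set.mem_iUnion, Set.mem_Icc]
    constructor
    · intro hx
      obtain ⟨n, hn⟩ := exists_nat_ge x
      exact ⟨n, hx, hn⟩
    · rintro ⟨n, hn, -⟩; exact hn
  have hmono : Monotone fun n : ℕ => Set.Icc (0:ℝ) n := by
    intro m n hmn
    exact Set.Icc_subset_Icc le_rfl (by exact_mod_cast hmn)
  have h3 := tendsto_measure_iUnion_atTop (μ := μ) hmono
  rw [← h2, h1] at h3
  have h4 := h3.eventually (lt_mem_nhds (show (1/2 : ENNReal) < 1 by norm_num))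
  obtain ⟨n, hn⟩ := h4.exists
  refine ⟨n, Nat.cast_nonneg n, ?_⟩
  have h5 := ENNReal.toReal_mono (measure_ne_top μ _) (le_of_lt hn)
  have h6 : ((1:ENNReal)/2).toReal = 1/2 := by norm_num
  rw [h6] at h5
  exact h5

include hz in
lemma Finv_bounds (μ : Measure ℝ) [IsProbabilityMeasure μ] (hμ : μ (Set.Iio 0) = 0)
    (hre : z.re < 0) (him1 : z.im ≤ 1)
    (T : ℝ) (hT : 0 ≤ T) (hμT : (1:ℝ)/2 ≤ (μ (Set.Icc 0 T)).toReal) :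
    ((∫ t : ℝ, (z - t)⁻¹ ∂μ)⁻¹).re ≤ z.re ∧
    ((∫ t : ℝ, (z - t)⁻¹ ∂μ)⁻¹).im ≤ 2 * z.im * ((T - z.re)^2 + 1) / z.re^2 := by
  set G : ℂ := ∫ t : ℝ, (z - t)⁻¹ ∂μ with hGdef
  set I : ℝ := ∫ t, ((z.re - t)^2 + z.im^2)⁻¹ ∂μ with hIdef
  set M : ℝ := (T - z.re)^2 + 1 with hMdef
  have hMpos : (0:ℝ) < M := by positivity
  have hI : 0 < I := Ipos z hz μ
  have hGre : G.re ≤ z.re * I := G_re_le z hz μ hμ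
  have hGim : G.im = -z.im * I := G_im z hz μ
  have hNS : Complex.normSq G ≤ I := normSq_G_le z hz μ
  have hG0 : G ≠ 0 := by
    intro hG
    rw [hG] at hGim
    simp only [Complex.zero_im] at hGim
    nlinarith
  have hNSpos : 0 < Complex.normSq G := Complex.normSq_pos.mpr hG0
  have hlow : (2*M)⁻¹ ≤ I := I_low z hz μ hre him1 T hT hμT
  have hNSge : z.re^2 * I^2 ≤ Complex.normSq G := by
    have hns : Complex.normSq G = G.re^2 + G.im^2 := by
      rw [Complex.normSq_apply]; ring
    nlinarith [sq_nonneg G.im, mul_neg_of_neg_of_pos hre hI]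
  constructor
  · rw [Complex.inv_re, div_le_iff₀ hNSpos]
    calc G.re ≤ z.re * I := hGre
      _ ≤ z.re * Complex.normSq G := by nlinarith
  · have hre2 : (0:ℝ) < z.re^2 := by nlinarith
    rw [Complex.inv_im, hGim, div_le_div_iff₀ hNSpos hre2]
    have h1 : 1 ≤ 2*M*I := by
      rw [show (2*M)⁻¹ = 1/(2*M) by ring] at hlow
      rw [div_le_iff₀ (by positivity)] at hlow
      linarith [hlow]
    have h2 : -(-z.im * I) = z.im * I := by ring
    rw [h2]
    have key : z.im * I * z.re^2 ≤ 2 * z.im * M * (z.re^2 * I^2) := by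
      have : z.im * I * z.re ^ 2 * 1 ≤ z.im * I * z.re ^ 2 * (2*M*I) := by
        apply mul_le_mul_of_nonneg_left h1
        positivity
      nlinarith
    calc z.im * I * z.re^2 ≤ 2 * z.im * M * (z.re^2 * I^2) := key
      _ ≤ 2 * z.im * M * Complex.normSq G := by
          apply mul_le_mul_of_nonneg_left hNSge
          positivity

end pt2

set_option maxHeartbeats 1000000 in
lemma rho_pointwise (μ ν ρ : Measure ℝ) [IsProbabilityMeasure μ] [IsProbabilityMeasure ν]
    [IsProbabilityMeasure ρ] (hμ : μ (Set.Iio 0) = 0) (hν : ν (Set.Iio 0) = 0)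
    (Tμ Tν : ℝ) (hTμ0 : 0 ≤ Tμ) (hTν0 : 0 ≤ Tν)
    (hTμ : (1:ℝ)/2 ≤ (μ (Set.Icc 0 Tμ)).toReal) (hTν : (1:ℝ)/2 ≤ (ν (Set.Icc 0 Tν)).toReal)
    (z : ℂ) (hre : z.re < 0) (him : 0 < z.im) (him1 : z.im ≤ 1)
    (h : (∫ t, (z - (t : ℂ))⁻¹ ∂ρ)⁻¹ =
        (∫ t, (z - (t : ℂ))⁻¹ ∂μ)⁻¹ + (∫ t, (z - (t : ℂ))⁻¹ ∂ν)⁻¹ - z) :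
    (ρ (Set.Icc (z.re - z.im) (z.re + z.im))).toReal
      ≤ 4 * (((Tμ - z.re)^2 + 1) + ((Tν - z.re)^2 + 1)) / z.re^4 * z.im^2 := by
  have hre2 : (0:ℝ) < z.re^2 := by nlinarith
  have hre4 : (0:ℝ) < z.re^4 := by nlinarith
  set Mμ : ℝ := (Tμ - z.re)^2 + 1 with hMμdef
  set Mν : ℝ := (Tν - z.re)^2 + 1 with hMνdef
  have hMμpos : (0:ℝ) < Mμ := by positivity
  have hMνpos : (0:ℝ) < Mν := by positivity
  obtain ⟨hμre, hμim⟩ := Finv_bounds z him μ hμ hre him1 Tμ hTμ0 hTμ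
  obtain ⟨hνre, hνim⟩ := Finv_bounds z him ν hν hre him1 Tν hTν0 hTν
  set Fμ : ℂ := (∫ t, (z - (t : ℂ))⁻¹ ∂μ)⁻¹ with hFμdef
  set Fν : ℂ := (∫ t, (z - (t : ℂ))⁻¹ ∂ν)⁻¹ with hFνdef
  set S : ℂ := Fμ + Fν - z with hSdef
  set Gρ : ℂ := ∫ t : ℝ, (z - (t : ℂ))⁻¹ ∂ρ with hGρdef
  set Iρ : ℝ := ∫ t, ((z.re - t)^2 + z.im^2)⁻¹ ∂ρ with hIρdef
  have hIρ : 0 < Iρ := Ipos z him ρ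
  have hGρim : Gρ.im = -z.im * Iρ := G_im z him ρ
  have hGρ0 : Gρ ≠ 0 := by
    intro hG
    rw [hG] at hGρim
    simp only [Complex.zero_im] at hGρim
    nlinarith
  have hGρS : Gρ = S⁻¹ := by
    rw [← inv_inv Gρ, h]
  have hSre : S.re ≤ z.re := by
    simp only [hSdef, Complex.sub_re, Complex.add_re]
    linarith
  have hS0 : S ≠ 0 := by
    intro hS
    rw [hS] at hSre
    simp only [Complex.zero_re] at hSre
    linarith
  have hNSSpos : 0 < Complex.normSq S := Complex.normSq_pos.mpr hS0
  have hNSS : z.re^2 ≤ Complex.normSq S := by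
    rw [Complex.normSq_apply]
    nlinarith [sq_nonneg S.im]
  -- key identity
  have hkey : S.im = z.im * Iρ * Complex.normSq S := by
    have h1 : Gρ.im = -S.im / Complex.normSq S := by rw [hGρS, Complex.inv_im]
    rw [hGρim] at h1
    field_simp at h1
    linarith
  have hSim_pos : 0 < S.im := by
    rw [hkey]; exact mul_pos (mul_pos him hIρ) hNSSpos
  have hSim_ub : S.im ≤ 2 * z.im * Mμ / z.re^2 + 2 * z.im * Mν / z.re^2 := by
    have : S.im = Fμ.im + Fν.im - z.im := by
      simp only [hSdef, Complex.sub_im, Complex.add_im]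
    rw [this]
    linarith
  -- clear denominators
  have hμim' : S.im * z.re^2 ≤ 2 * z.im * (Mμ + Mν) := by
    have h6 : S.im * z.re^2 ≤ (2 * z.im * Mμ / z.re^2 + 2 * z.im * Mν / z.re^2) * z.re^2 :=
      mul_le_mul_of_nonneg_right hSim_ub hre2.le
    have h7 : (2 * z.im * Mμ / z.re^2 + 2 * z.im * Mν / z.re^2) * z.re^2
        = 2 * z.im * (Mμ + Mν) := by
      rw [add_mul, div_mul_cancel₀ _ hre2.ne', div_mul_cancel₀ _ hre2.ne']
      ring
    exact h6.trans h7.le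
  -- Iρ bound: z.im * Iρ * z.re^2 ≤ S.im * z.re^2 / normSq S * ... do directly
  have hIρb : Iρ * z.re^4 ≤ 2 * (Mμ + Mν) := by
    have h2 : z.im * Iρ * z.re^2 * z.re^2 ≤ S.im * z.re^2 := by
      have h3 : z.im * Iρ * z.re^2 ≤ S.im := by
        calc z.im * Iρ * z.re^2 ≤ z.im * Iρ * Complex.normSq S := by
              exact mul_le_mul_of_nonneg_left hNSS (mul_pos him hIρ).le
          _ = S.im := hkey.symm
      nlinarith
    have h4 : z.im * Iρ * z.re^2 * z.re^2 ≤ 2 * z.im * (Mμ + Mν) := le_trans h2 hμim'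
    nlinarith
  -- measure bound
  have hmb : (2 * z.im^2)⁻¹ * (ρ (Set.Icc (z.re - z.im) (z.re + z.im))).toReal
      ≤ ∫ t in Set.Icc (z.re - z.im) (z.re + z.im), ((z.re - t)^2 + z.im^2)⁻¹ ∂ρ := by
    rw [← measureReal_def]
    apply setIntegral_ge_of_const_le_real measurableSet_Icc (measure_ne_top ρ _)
    · intro t ht
      apply inv_anti₀ (Dpos z t him.ne')
      have h1 := ht.1
      have h2 := ht.2
      nlinarith
    · exact (hintD z him ρ).integrableOn
  have hmb2 : ∫ t in Set.Icc (z.re - z.im) (z.re + z.im), ((z.re - t)^2 + z.im^2)⁻¹ ∂ρ ≤ Iρ :=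
    setIntegral_le_integral (hintD z him ρ)
      (Filter.Eventually.of_forall fun t => le_of_lt (inv_pos.mpr (Dpos z t him.ne')))
  have hfin : (ρ (Set.Icc (z.re - z.im) (z.re + z.im))).toReal ≤ 2 * z.im^2 * Iρ := by
    have := le_trans hmb hmb2
    have h5 : (0:ℝ) < 2 * z.im^2 := by positivity
    rw [inv_mul_le_iff₀ h5] at this
    linarith [this]
  calc (ρ (Set.Icc (z.re - z.im) (z.re + z.im))).toReal ≤ 2 * z.im^2 * Iρ := hfin
    _ ≤ 4 * (Mμ + Mν) / z.re^4 * z.im^2 := by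
        rw [div_mul_eq_mul_div, le_div_iff₀ hre4]
        nlinarith

set_option maxHeartbeats 1000000 in
lemma rho_icc (μ ν ρ : Measure ℝ) [IsProbabilityMeasure μ] [IsProbabilityMeasure ν]
    [IsProbabilityMeasure ρ] (hμ : μ (Set.Iio 0) = 0) (hν : ν (Set.Iio 0) = 0)
    (h : ∀ z : ℂ, 0 < z.im →
      (∫ t, (z - (t : ℂ))⁻¹ ∂ρ)⁻¹ =
        (∫ t, (z - (t : ℂ))⁻¹ ∂μ)⁻¹ + (∫ t, (z - (t : ℂ))⁻¹ ∂ν)⁻¹ - z)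
    (a b : ℝ) (hab : a < b) (hb : b < 0) :
    ρ (Set.Icc a b) = 0 := by
  obtain ⟨Tμ, hTμ0, hTμ⟩ := exists_T μ hμ
  obtain ⟨Tν, hTν0, hTν⟩ := exists_T ν hν
  have hb2 : (0:ℝ) < b^2 := by nlinarith
  have hb4 : (0:ℝ) < b^4 := by nlinarith
  set K : ℝ := 4 * (((Tμ - a)^2 + 1) + ((Tν - a)^2 + 1)) / b^4 with hKdef
  have hKpos : 0 < K := by
    apply div_pos (by positivity) hb4
  -- pointwise covering estimate
  have key : ∀ x ε : ℝ, a ≤ x → x ≤ b → 0 < ε → ε ≤ 1 →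
      ρ (Set.Icc (x - ε) (x + ε)) ≤ ENNReal.ofReal (K * ε^2) := by
    intro x ε hax hxb hε hε1
    set z : ℂ := ⟨x, ε⟩ with hzdef
    have hzre : z.re = x := rfl
    have hzim : z.im = ε := rfl
    have hx0 : x < 0 := lt_of_le_of_lt hxb hb
    have hbd := rho_pointwise μ ν ρ hμ hν Tμ Tν hTμ0 hTν0 hTμ hTν z
      (by rw [hzre]; exact hx0) (by rw [hzim]; exact hε) (by rw [hzim]; exact hε1)
      (h z (by rw [hzim]; exact hε))
    rw [hzre, hzim] at hbd
    have hx2 : (0:ℝ) < x^2 := by nlinarith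
    have hx4 : (0:ℝ) < x^4 := by nlinarith
    have hcomp : 4 * (((Tμ - x)^2 + 1) + ((Tν - x)^2 + 1)) / x^4 * ε^2 ≤ K * ε^2 := by
      apply mul_le_mul_of_nonneg_right _ (sq_nonneg ε)
      have hb2x2 : b^2 ≤ x^2 := by nlinarith
      have hb4x4 : b^4 ≤ x^4 := by nlinarith
      have hnum : 4 * (((Tμ - x)^2 + 1) + ((Tν - x)^2 + 1))
          ≤ 4 * (((Tμ - a)^2 + 1) + ((Tν - a)^2 + 1)) := by
        have h1 : (Tμ - x)^2 ≤ (Tμ - a)^2 := by nlinarith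
        have h2 : (Tν - x)^2 ≤ (Tν - a)^2 := by nlinarith
        linarith
      rw [hKdef]
      exact div_le_div₀ (by positivity) hnum hb4 hb4x4
    rw [ENNReal.le_ofReal_iff_toReal_le (measure_ne_top ρ _) (by positivity)]
    exact hbd.trans hcomp
  -- covering argument
  have cover : ∀ n : ℕ, 1 ≤ n → (b - a) / (2 * n) ≤ 1 →
      ρ (Set.Icc a b) ≤ (n + 1 : ℕ) * ENNReal.ofReal (K * ((b - a) / (2 * n))^2) := by
    intro n hn1 hsm
    have hn0 : (0:ℝ) < n := by exact_mod_cast hn1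
    set ε : ℝ := (b - a) / (2 * n) with hεdef
    have hε : 0 < ε := div_pos (by linarith) (by positivity)
    set h' : ℝ := (b - a) / n with h'def
    have hh' : 0 < h' := div_pos (by linarith) hn0
    have hεh : h' = 2 * ε := by rw [hεdef, h'def]; field_simp
    have hnh : a + n * h' = b := by rw [h'def]; field_simp; ring
    have claim : ∀ k : ℕ, k ≤ n →
        ρ (Set.Ioc a (a + k * h')) ≤ k * ENNReal.ofReal (K * ε^2) := by
      intro k
      induction k with
      | zero => intro _; simp
      | succ k ih =>
        intro hk
        have hkn : k ≤ n := Nat.le_of_succ_le hk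
        have ih' := ih hkn
        have hk0 : (0:ℝ) ≤ k := Nat.cast_nonneg k
        set c : ℝ := a + k * h' + ε with hcdef
        have hca : a ≤ c := by nlinarith
        have hcb : c ≤ b := by
          have hkk : (k:ℝ) + 1 ≤ n := by exact_mod_cast hk
          nlinarith
        have hsub : Set.Ioc a (a + (k+1 : ℕ) * h')
            ⊆ Set.Ioc a (a + k * h') ∪ Set.Icc (c - ε) (c + ε) := by
          intro t ht
          obtain ⟨ht1, ht2⟩ := ht
          push_cast at ht2
          rcases le_or_gt t (a + k * h') with h1 | h1
          · exact Or.inl ⟨ht1, h1⟩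
          · right
            constructor
            · rw [hcdef]; linarith
            · rw [hcdef]; nlinarith
        calc ρ (Set.Ioc a (a + (k+1:ℕ) * h'))
            ≤ ρ (Set.Ioc a (a + k * h')) + ρ (Set.Icc (c - ε) (c + ε)) :=
              le_trans (measure_mono hsub) (measure_union_le _ _)
          _ ≤ k * ENNReal.ofReal (K * ε^2) + ENNReal.ofReal (K * ε^2) :=
              add_le_add ih' (key c ε hca hcb hε hsm)
          _ = (k+1 : ℕ) * ENNReal.ofReal (K * ε^2) := by push_cast; ring
    have hone : ρ {a} ≤ ENNReal.ofReal (K * ε^2) := by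
      have hsub : ({a} : Set ℝ) ⊆ Set.Icc (a - ε) (a + ε) := by
        intro t ht
        simp only [Set.mem_singleton_iff] at ht
        subst ht
        constructor <;> linarith
      exact le_trans (measure_mono hsub) (key a ε le_rfl hab.le hε hsm)
    have hsplit : Set.Icc a b ⊆ ({a} : Set ℝ) ∪ Set.Ioc a b := by
      intro t ht
      rcases eq_or_lt_of_le ht.1 with h1 | h1
      · exact Or.inl (by simp [h1.symm])
      · exact Or.inr ⟨h1, ht.2⟩
    calc ρ (Set.Icc a b) ≤ ρ ({a} : Set ℝ) + ρ (Set.Ioc a b) :=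
          le_trans (measure_mono hsplit) (measure_union_le _ _)
      _ ≤ ENNReal.ofReal (K * ε^2) + n * ENNReal.ofReal (K * ε^2) :=
          add_le_add hone (by rw [← hnh]; exact claim n le_rfl)
      _ = (n + 1 : ℕ) * ENNReal.ofReal (K * ε^2) := by push_cast; ring
  -- pass to the limit
  have hlim : ∀ᶠ n : ℕ in Filter.atTop,
      ρ (Set.Icc a b) ≤ ENNReal.ofReal (K * (b - a)^2 * (1 / n)) := by
    filter_upwards [Filter.eventually_ge_atTop (max 1 (Nat.ceil ((b - a) / 2)))] with n hn
    have hn1 : 1 ≤ n := le_trans (le_max_left _ _) hn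
    have hn0 : (0:ℝ) < n := by exact_mod_cast hn1
    have hn1r : (1:ℝ) ≤ n := by exact_mod_cast hn1
    have hceil : Nat.ceil ((b - a) / 2) ≤ n := le_trans (le_max_right _ _) hn
    have hsm : (b - a) / (2 * n) ≤ 1 := by
      rw [div_le_one (by positivity)]
      have h1 := Nat.le_ceil ((b - a) / 2)
      have h2 : ((Nat.ceil ((b - a) / 2) : ℕ) : ℝ) ≤ n := by exact_mod_cast hceil
      linarith
    refine le_trans (cover n hn1 hsm) ?_
    have hcast : ((n + 1 : ℕ) : ENNReal) = ENNReal.ofReal ((n:ℝ) + 1) := by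
      rw [← ENNReal.ofReal_natCast (n + 1)]
      congr 1
      push_cast
      ring
    rw [hcast, ← ENNReal.ofReal_mul (by positivity)]
    apply ENNReal.ofReal_le_ofReal
    have expand : ((n:ℝ) + 1) * (K * ((b - a) / (2 * n))^2)
        = K * (b - a)^2 * (((n:ℝ) + 1) / (4 * n^2)) := by
      field_simp
      ring
    rw [expand]
    apply mul_le_mul_of_nonneg_left _ (by positivity)
    rw [div_le_div_iff₀ (by positivity) hn0]
    nlinarith
  have htends : Filter.Tendsto (fun n : ℕ => ENNReal.ofReal (K * (b - a)^2 * (1 / n)))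
      Filter.atTop (nhds 0) := by
    rw [show (0:ENNReal) = ENNReal.ofReal 0 by simp]
    apply ENNReal.tendsto_ofReal
    have h1 := tendsto_one_div_atTop_nhds_zero_nat.const_mul (K * (b - a)^2)
    simpa using h1
  have hfin := ge_of_tendsto htends hlim
  exact le_antisymm hfin (zero_le)

theorem boolean_convolution_preserves_positivity (μ ν ρ : Measure ℝ)
    [IsProbabilityMeasure μ] [IsProbabilityMeasure ν] [IsProbabilityMeasure ρ]
    (hμ : μ (Set.Iio 0) = 0) (hν : ν (Set.Iio 0) = 0)
    (h : ∀ z : ℂ, 0 < z.im →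
      (∫ t, (z - (t : ℂ))⁻¹ ∂ρ)⁻¹ =
        (∫ t, (z - (t : ℂ))⁻¹ ∂μ)⁻¹ + (∫ t, (z - (t : ℂ))⁻¹ ∂ν)⁻¹ - z) :
    ρ (Set.Iio 0) = 0 := by
  have hsub : Set.Iio (0:ℝ) ⊆ ⋃ n : ℕ, Set.Icc (-(n:ℝ) - 2) (-((n:ℝ) + 2)⁻¹) := by
    intro x hx
    simp only [Set.mem_Iio] at hx
    obtain ⟨n, hn⟩ := exists_nat_ge (max (-x) (-x)⁻¹)
    have h1 : -x ≤ n := le_trans (le_max_left _ _) hn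
    have h2 : (-x)⁻¹ ≤ n := le_trans (le_max_right _ _) hn
    have hxpos : 0 < -x := by linarith
    refine Set.mem_iUnion.mpr ⟨n, ?_, ?_⟩
    · linarith
    · have hinv : ((n:ℝ) + 2)⁻¹ ≤ -x := by
        have h3 : (-x)⁻¹ ≤ (n:ℝ) + 2 := by linarith
        have h4 := inv_anti₀ (inv_pos.mpr hxpos) h3
        rwa [inv_inv] at h4
      linarith
  have h0 : ρ (⋃ n : ℕ, Set.Icc (-(n:ℝ) - 2) (-((n:ℝ) + 2)⁻¹)) = 0 := by
    apply measure_iUnion_null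
    intro n
    have hn2 : (0:ℝ) < (n:ℝ) + 2 := by positivity
    have hi : ((n:ℝ) + 2)⁻¹ ≤ 2⁻¹ := inv_anti₀ (by norm_num) (by
      have : (0:ℝ) ≤ (n:ℝ) := Nat.cast_nonneg n
      linarith)
    have hipos : (0:ℝ) < ((n:ℝ) + 2)⁻¹ := inv_pos.mpr hn2
    apply rho_icc μ ν ρ hμ hν h
    · have : (0:ℝ) ≤ (n:ℝ) := Nat.cast_nonneg n
      linarith
    · linarith
  have := measure_mono (μ := ρ) hsub
  rw [h0] at this
  exact le_antisymm this (zero_le)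
end

section
/- Boolean convolution powers preserve positive support: let t > 0, let μ be a probability measure on ℝ with μ((−∞, 0)) = 0, and let ν be a probability measure on ℝ such that for all z ∈ ℂ with Im z > 0, F_ν(z) = (1 − t)·z + t·F_μ(z), where F_λ(z) = ( ∫ (z − s)⁻¹ dλ(s) )⁻¹ denotes the reciprocal Cauchy transform. Then ν((−∞, 0)) = 0. -/
open MeasureTheory

open Complex Set

namespace BoolPowAux

lemma zsub_ne {z : ℂ} (hz : 0 < z.im) (s : ℝ) : z - (s:ℂ) ≠ 0 := by
  intro h
  have h2 : (z - (s:ℂ)).im = 0 := by rw [h]; simp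
  rw [Complex.sub_im, Complex.ofReal_im] at h2
  linarith

lemma normSq_zsub (z : ℂ) (s : ℝ) :
    Complex.normSq (z - (s:ℂ)) = (z.re - s)^2 + z.im^2 := by
  rw [Complex.normSq_apply, Complex.sub_re, Complex.sub_im, Complex.ofReal_re,
    Complex.ofReal_im]
  ring

lemma inv_re' (z : ℂ) (s : ℝ) :
    ((z - (s:ℂ))⁻¹).re = (z.re - s) / ((z.re - s)^2 + z.im^2) := by
  rw [Complex.inv_re, normSq_zsub, Complex.sub_re, Complex.ofReal_re]

lemma inv_im' (z : ℂ) (s : ℝ) :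
    ((z - (s:ℂ))⁻¹).im = -z.im / ((z.re - s)^2 + z.im^2) := by
  rw [Complex.inv_im, normSq_zsub, Complex.sub_im, Complex.ofReal_im, sub_zero]

lemma integrable_of_bdd {E : Type*} [NormedAddCommGroup E] {μ : Measure ℝ} [IsFiniteMeasure μ]
    {f : ℝ → E} (hf : Continuous f) {C : ℝ} (h : ∀ s, ‖f s‖ ≤ C) : Integrable f μ :=
  (integrable_const C).mono' hf.aestronglyMeasurable (Filter.Eventually.of_forall h)

lemma cont_inv {z : ℂ} (hz : 0 < z.im) : Continuous fun s : ℝ => (z - (s:ℂ))⁻¹ :=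
  (continuous_const.sub Complex.continuous_ofReal).inv₀ (zsub_ne hz)

lemma norm_inv_le {z : ℂ} (hz : 0 < z.im) (s : ℝ) : ‖(z - (s:ℂ))⁻¹‖ ≤ (z.im)⁻¹ := by
  rw [norm_inv]
  apply inv_anti₀ hz
  calc z.im = (z - (s:ℂ)).im := by rw [Complex.sub_im, Complex.ofReal_im, sub_zero]
    _ ≤ |(z - (s:ℂ)).im| := le_abs_self _
    _ ≤ ‖z - (s:ℂ)‖ := Complex.abs_im_le_norm _

lemma integrable_inv {z : ℂ} (hz : 0 < z.im) (μ : Measure ℝ) [IsFiniteMeasure μ] :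
    Integrable (fun s : ℝ => (z - (s:ℂ))⁻¹) μ :=
  integrable_of_bdd (cont_inv hz) (norm_inv_le hz)

lemma sq_integral_le {μ : Measure ℝ} [IsProbabilityMeasure μ] {g : ℝ → ℝ}
    (hg : Integrable g μ) (hg2 : Integrable (fun s => g s ^ 2) μ) :
    (∫ s, g s ∂μ)^2 ≤ ∫ s, g s ^ 2 ∂μ := by
  set m := ∫ s, g s ∂μ with hm
  have h0 : 0 ≤ ∫ s, (g s - m)^2 ∂μ := integral_nonneg (fun s => sq_nonneg _)
  have hexp : ∫ s, (g s - m)^2 ∂μ = (∫ s, g s ^ 2 ∂μ) - m^2 := by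
    have heq : (fun s => (g s - m)^2) = fun s => g s ^ 2 - (2*m) * g s + m^2 := by
      funext s; ring
    have h2 : Integrable (fun s => 2 * m * g s) μ := hg.const_mul (2*m)
    have h1 : Integrable (fun s => g s ^ 2 - 2 * m * g s) μ := hg2.sub h2
    rw [heq]
    rw [integral_add h1 (integrable_const _), integral_sub hg2 h2, integral_const_mul,
      integral_const]
    simp [← hm]
    ring
  linarith


section Integrands
variable {x y : ℝ}

lemma q_pos (hy : 0 < y) (s : ℝ) : 0 < (x - s)^2 + y^2 :=
  add_pos_of_nonneg_of_pos (sq_nonneg _) (by positivity)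

lemma cont_q : Continuous fun s : ℝ => (x - s)^2 + y^2 := by fun_prop

lemma int_inv_q (hy : 0 < y) (θ : Measure ℝ) [IsFiniteMeasure θ] :
    Integrable (fun s : ℝ => 1 / ((x - s)^2 + y^2)) θ := by
  refine integrable_of_bdd ?_ (C := 1/y^2) ?_
  · exact continuous_const.div cont_q (fun s => (q_pos hy s).ne')
  · intro s
    rw [Real.norm_eq_abs, abs_of_pos (by positivity)]
    exact one_div_le_one_div_of_le (by positivity) (le_add_of_nonneg_left (sq_nonneg _))

lemma int_u_div_q (hy : 0 < y) (u : ℝ) (θ : Measure ℝ) [IsFiniteMeasure θ] :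
    Integrable (fun s : ℝ => u / ((x - s)^2 + y^2)) θ := by
  have := (int_inv_q hy θ (x := x)).const_mul u
  simpa [div_eq_mul_inv] using this

lemma int_lin_div_q (hy : 0 < y) (θ : Measure ℝ) [IsFiniteMeasure θ] :
    Integrable (fun s : ℝ => (x - s) / ((x - s)^2 + y^2)) θ := by
  refine integrable_of_bdd ?_ (C := 1/(2*y)) ?_
  · exact (continuous_const.sub continuous_id).div cont_q (fun s => (q_pos hy s).ne')
  · intro s
    rw [Real.norm_eq_abs, abs_div, abs_of_pos (q_pos hy s)]
    rw [div_le_div_iff₀ (q_pos hy s) (by positivity)]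
    nlinarith [sq_nonneg (|x - s| - y), _root_.sq_abs (x - s), abs_nonneg (x - s)]

lemma int_lin_div_q' (hy : 0 < y) (θ : Measure ℝ) [IsFiniteMeasure θ] :
    Integrable (fun s : ℝ => (s - x) / ((x - s)^2 + y^2)) θ := by
  have heq : (fun s : ℝ => (s - x) / ((x - s)^2 + y^2)) =
      fun s : ℝ => -((x - s) / ((x - s)^2 + y^2)) := by
    funext s; ring
  rw [heq]
  exact (int_lin_div_q hy θ).neg

lemma Gre (hy : 0 < y) (θ : Measure ℝ) [IsFiniteMeasure θ] :
    (∫ s, ((⟨x, y⟩ : ℂ) - (s : ℂ))⁻¹ ∂θ).re = ∫ s, (x - s) / ((x - s)^2 + y^2) ∂θ := by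
  have h := integral_re (μ := θ) (integrable_inv (z := (⟨x, y⟩ : ℂ)) hy θ)
  simp only [RCLike.re_to_complex] at h
  rw [← h]
  congr 1
  funext s
  rw [inv_re' (⟨x, y⟩ : ℂ) s]

lemma Gim (hy : 0 < y) (θ : Measure ℝ) [IsFiniteMeasure θ] :
    (∫ s, ((⟨x, y⟩ : ℂ) - (s : ℂ))⁻¹ ∂θ).im = ∫ s, -y / ((x - s)^2 + y^2) ∂θ := by
  have h := integral_im (μ := θ) (integrable_inv (z := (⟨x, y⟩ : ℂ)) hy θ)
  simp only [RCLike.im_to_complex] at h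
  rw [← h]
  congr 1
  funext s
  rw [inv_im' (⟨x, y⟩ : ℂ) s]

lemma normSq_G_le (hy : 0 < y) (θ : Measure ℝ) [IsProbabilityMeasure θ] :
    Complex.normSq (∫ s, ((⟨x, y⟩ : ℂ) - (s : ℂ))⁻¹ ∂θ) ≤
      ∫ s, 1 / ((x - s)^2 + y^2) ∂θ := by
  set f : ℝ → ℂ := fun s => ((⟨x, y⟩ : ℂ) - (s : ℂ))⁻¹ with hf
  have hfi : Integrable f θ := integrable_inv hy θ
  have hnorm2 : ∀ s, ‖f s‖ ^ 2 = 1 / ((x - s)^2 + y^2) := by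
    intro s
    rw [hf, Complex.sq_norm, map_inv₀ Complex.normSq, normSq_zsub, one_div]
  have h1 : Complex.normSq (∫ s, f s ∂θ) = ‖∫ s, f s ∂θ‖ ^ 2 := by
    rw [Complex.sq_norm]
  have h2 : ‖∫ s, f s ∂θ‖ ≤ ∫ s, ‖f s‖ ∂θ := norm_integral_le_integral_norm f
  have h4 : Integrable (fun s => ‖f s‖ ^ 2) θ := by
    rw [show (fun s => ‖f s‖ ^ 2) = fun s : ℝ => 1 / ((x - s)^2 + y^2) from funext hnorm2]
    exact int_inv_q hy θ
  calc Complex.normSq (∫ s, f s ∂θ) = ‖∫ s, f s ∂θ‖ ^ 2 := h1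
    _ ≤ (∫ s, ‖f s‖ ∂θ) ^ 2 := pow_le_pow_left₀ (norm_nonneg _) h2 2
    _ ≤ ∫ s, ‖f s‖ ^ 2 ∂θ := sq_integral_le hfi.norm h4
    _ = ∫ s, 1 / ((x - s)^2 + y^2) ∂θ := by congr 1; funext s; exact hnorm2 s

end Integrands

set_option maxHeartbeats 1000000 in
lemma point_bound (t : ℝ) (ht : 0 < t) (μ ν : Measure ℝ)
    [IsProbabilityMeasure μ] [IsProbabilityMeasure ν]
    (hμae : ∀ᵐ s ∂μ, 0 ≤ s)
    (h : ∀ z : ℂ, 0 < z.im →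
      (∫ s, (z - (s : ℂ))⁻¹ ∂ν)⁻¹ =
        ((1 - t : ℝ) : ℂ) * z + (t : ℂ) * (∫ s, (z - (s : ℂ))⁻¹ ∂μ)⁻¹)
    (a b M : ℝ) (hb : b < 0) (hM0 : 0 ≤ M)
    (hMμ : (1:ℝ)/2 ≤ (μ (Set.Icc 0 M)).toReal)
    {x y : ℝ} (hax : a ≤ x) (hxb : x ≤ b) (hy : 0 < y) (hyb : y ≤ -b) :
    (ν (Set.Ioo (x - y) (x + y))).toReal ≤
      (2 * (1 + t / (b^2 * ((-b) / (2*((M - a)^2 + b^2)))^2)) / b^2) * y^2 := by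
  set c : ℝ := (-b) / (2*((M - a)^2 + b^2)) with hc
  have hx0 : x < 0 := lt_of_le_of_lt hxb hb
  have hb0 : 0 < -b := by linarith
  have hb2 : (0:ℝ) < b^2 := by nlinarith
  have hden : 0 < (M - a)^2 + b^2 := by linarith [sq_nonneg (M - a)]
  have hcpos : 0 < c := by rw [hc]; exact div_pos hb0 (by linarith)
  have hx2b2 : b^2 ≤ x^2 := by nlinarith
  set z : ℂ := ⟨x, y⟩ with hzdef
  have hzre' : z.re = x := by rw [hzdef]
  have hzim' : z.im = y := by rw [hzdef]
  have hzim : (0:ℝ) < z.im := by rw [hzim']; exact hy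
  set Gm : ℂ := ∫ s, (z - (s : ℂ))⁻¹ ∂μ with hGm
  set Gn : ℂ := ∫ s, (z - (s : ℂ))⁻¹ ∂ν with hGn
  have hGmre : Gm.re = ∫ s, (x - s) / ((x - s)^2 + y^2) ∂μ := Gre hy μ
  have hGmim : Gm.im = ∫ s, -y / ((x - s)^2 + y^2) ∂μ := Gim hy μ
  have hGnim : Gn.im = ∫ s, -y / ((x - s)^2 + y^2) ∂ν := Gim hy ν
  have h4 : Complex.normSq Gm ≤ ∫ s, 1 / ((x - s)^2 + y^2) ∂μ := normSq_G_le hy μ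
  have hF := h z hzim
  rw [← hGm, ← hGn] at hF
  clear_value z Gm Gn
  clear_value c
  have himm_eq : -Gm.im = ∫ s, y / ((x - s)^2 + y^2) ∂μ := by
    rw [hGmim, ← integral_neg]; congr 1; funext s; ring
  have himn_eq : -Gn.im = ∫ s, y / ((x - s)^2 + y^2) ∂ν := by
    rw [hGnim, ← integral_neg]; congr 1; funext s; ring
  -- (2) Im bound for μ
  have hGmim_le : -Gm.im ≤ y / b^2 := by
    rw [himm_eq]
    have hmono : ∫ s, y / ((x - s)^2 + y^2) ∂μ ≤ ∫ _s, y / b^2 ∂μ := by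
      apply integral_mono_ae (int_u_div_q hy y μ) (integrable_const _)
      filter_upwards [hμae] with s hs
      exact div_le_div₀ hy.le le_rfl hb2 (by nlinarith)
    simpa using hmono
  -- (3)(4)(5)
  have h3 : Gm.re ≤ x * ∫ s, 1 / ((x - s)^2 + y^2) ∂μ := by
    rw [hGmre, ← integral_const_mul]
    apply integral_mono_ae (int_lin_div_q hy μ) ((int_inv_q hy μ).const_mul x)
    filter_upwards [hμae] with s hs
    rw [mul_one_div]
    exact (div_le_div_iff_of_pos_right (q_pos hy s)).mpr (by linarith)
  have h5 : Gm.re ≤ x * Complex.normSq Gm :=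
    h3.trans (mul_le_mul_of_nonpos_left h4 hx0.le)
  -- (6)
  have h6 : Gm.re ≤ -c := by
    have hnn : ∀ᵐ s ∂μ, 0 ≤ (s - x) / ((x - s)^2 + y^2) := by
      filter_upwards [hμae] with s hs
      exact div_nonneg (by linarith) (q_pos hy s).le
    have hle : ∫ s in Set.Icc 0 M, (s - x) / ((x - s)^2 + y^2) ∂μ ≤
        ∫ s, (s - x) / ((x - s)^2 + y^2) ∂μ :=
      setIntegral_le_integral (int_lin_div_q' hy μ) hnn
    have hconst : (-b) / ((M - a)^2 + b^2) * (μ (Set.Icc 0 M)).toReal ≤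
        ∫ s in Set.Icc 0 M, (s - x) / ((x - s)^2 + y^2) ∂μ := by
      apply setIntegral_ge_of_const_le_real measurableSet_Icc (measure_ne_top _ _) _
        (int_lin_div_q' hy μ).integrableOn
      intro s hs
      obtain ⟨hs0, hsM⟩ := hs
      apply div_le_div₀ (by linarith) (by linarith) (q_pos hy s)
      nlinarith
    have h2c : c ≤ (-b) / ((M - a)^2 + b^2) * (μ (Set.Icc 0 M)).toReal := by
      have hceq : c = (-b) / ((M - a)^2 + b^2) * (1/2) := by
        rw [hc]; field_simp
      rw [hceq]
      exact mul_le_mul_of_nonneg_left hMμ (div_nonneg hb0.le hden.le)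
    have hflip : Gm.re = -∫ s, (s - x) / ((x - s)^2 + y^2) ∂μ := by
      rw [hGmre, ← integral_neg]; congr 1; funext s; ring
    rw [hflip]
    linarith [h2c.trans (hconst.trans hle)]
  have hnsq_lb : c^2 ≤ Complex.normSq Gm := by
    have h7 : c^2 ≤ Gm.re * Gm.re := by nlinarith [h6, hcpos]
    have h8 := mul_self_nonneg Gm.im
    rw [Complex.normSq_apply]
    linarith
  have hnsq_pos : 0 < Complex.normSq Gm := lt_of_lt_of_le (by positivity) hnsq_lb
  -- (8)
  have hFre : (Gm⁻¹).re ≤ x := by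
    rw [Complex.inv_re, div_le_iff₀ hnsq_pos]
    linarith
  have hFim : (Gm⁻¹).im ≤ (y / b^2) / c^2 := by
    rw [Complex.inv_im]
    exact div_le_div₀ (by positivity) hGmim_le (by positivity) hnsq_lb
  -- (9)
  have hFre' : (Gn⁻¹).re = (1 - t) * x + t * (Gm⁻¹).re := by
    rw [hF, Complex.add_re, Complex.re_ofReal_mul, Complex.re_ofReal_mul, hzre']
  have hFim' : (Gn⁻¹).im = (1 - t) * y + t * (Gm⁻¹).im := by
    rw [hF, Complex.add_im, Complex.im_ofReal_mul, Complex.im_ofReal_mul, hzim']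
  have hFνre_le : (Gn⁻¹).re ≤ x := by
    rw [hFre']
    nlinarith [mul_le_mul_of_nonneg_left hFre ht.le]
  have hFνim_le : (Gn⁻¹).im ≤ y * (1 + t / (b^2 * c^2)) := by
    rw [hFim']
    have h1 : t * (Gm⁻¹).im ≤ t * ((y / b^2) / c^2) := mul_le_mul_of_nonneg_left hFim ht.le
    have h2 : t * ((y / b^2) / c^2) = y * (t / (b^2 * c^2)) := by ring
    have h3 : (1 - t) * y ≤ y := by nlinarith
    have h4 : y * (1 + t / (b^2 * c^2)) = y + y * (t / (b^2 * c^2)) := by ring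
    linarith
  have hGninv_ne : Gn⁻¹ ≠ 0 := by
    intro h0
    rw [h0] at hFνre_le
    simp only [Complex.zero_re] at hFνre_le
    linarith
  have hnsqF_pos : 0 < Complex.normSq (Gn⁻¹) := Complex.normSq_pos.mpr hGninv_ne
  have hnsqF_lb : b^2 ≤ Complex.normSq (Gn⁻¹) := by
    rw [Complex.normSq_apply]
    nlinarith [sq_nonneg (Gn⁻¹).im, hFνre_le]
  have hGnim_ub : -Gn.im ≤ (y * (1 + t / (b^2 * c^2))) / b^2 := by
    have him : -Gn.im = (Gn⁻¹).im / Complex.normSq (Gn⁻¹) := by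
      conv_lhs => rw [show Gn = (Gn⁻¹)⁻¹ from (inv_inv Gn).symm]
      rw [Complex.inv_im]
      ring
    rw [him]
    exact div_le_div₀ (by positivity) hFνim_le hb2 hnsqF_lb
  -- (10)
  have hball : (ν (Set.Ioo (x - y) (x + y))).toReal * (1 / (2*y)) ≤ -Gn.im := by
    rw [himn_eq]
    have hnn : 0 ≤ᵐ[ν] fun s => y / ((x - s)^2 + y^2) :=
      Filter.Eventually.of_forall fun s => div_nonneg hy.le (q_pos hy s).le
    have hle := setIntegral_le_integral (s := Set.Ioo (x - y) (x + y)) (int_u_div_q hy y ν) hnn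
    have hconst : 1 / (2*y) * (ν (Set.Ioo (x - y) (x + y))).toReal ≤
        ∫ s in Set.Ioo (x - y) (x + y), y / ((x - s)^2 + y^2) ∂ν := by
      apply setIntegral_ge_of_const_le_real measurableSet_Ioo (measure_ne_top _ _) _
        (int_u_div_q hy y ν).integrableOn
      intro s hs
      obtain ⟨h1, h2⟩ := hs
      rw [div_le_div_iff₀ (by positivity) (q_pos hy s)]
      nlinarith [mul_pos (show (0:ℝ) < y - (x - s) by linarith)
        (show (0:ℝ) < y + (x - s) by linarith)]
    calc (ν (Set.Ioo (x - y) (x + y))).toReal * (1 / (2*y))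
        = 1 / (2*y) * (ν (Set.Ioo (x - y) (x + y))).toReal := by ring
      _ ≤ _ := hconst
      _ ≤ _ := hle
  have h2y : (0:ℝ) < 2*y := by positivity
  have hfinal : (ν (Set.Ioo (x - y) (x + y))).toReal ≤
      2*y * ((y * (1 + t / (b^2 * c^2))) / b^2) := by
    have hh := hball.trans hGnim_ub
    calc (ν (Set.Ioo (x - y) (x + y))).toReal
        = ((ν (Set.Ioo (x - y) (x + y))).toReal * (1 / (2*y))) * (2*y) := by
          field_simp
      _ ≤ ((y * (1 + t / (b^2 * c^2))) / b^2) * (2*y) :=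
          mul_le_mul_of_nonneg_right hh h2y.le
      _ = 2*y * ((y * (1 + t / (b^2 * c^2))) / b^2) := by ring
  calc (ν (Set.Ioo (x - y) (x + y))).toReal
      ≤ 2*y * ((y * (1 + t / (b^2 * c^2))) / b^2) := hfinal
    _ = (2 * (1 + t / (b^2 * c^2)) / b^2) * y^2 := by ring

set_option maxHeartbeats 1000000 in
lemma interval_zero (t : ℝ) (ht : 0 < t) (μ ν : Measure ℝ)
    [IsProbabilityMeasure μ] [IsProbabilityMeasure ν]
    (hμae : ∀ᵐ s ∂μ, 0 ≤ s)
    (h : ∀ z : ℂ, 0 < z.im →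
      (∫ s, (z - (s : ℂ))⁻¹ ∂ν)⁻¹ =
        ((1 - t : ℝ) : ℂ) * z + (t : ℂ) * (∫ s, (z - (s : ℂ))⁻¹ ∂μ)⁻¹)
    (a b M : ℝ) (hab : a < b) (hb : b < 0) (hM0 : 0 ≤ M)
    (hMμ : (1:ℝ)/2 ≤ (μ (Set.Icc 0 M)).toReal) :
    ν (Set.Icc a b) = 0 := by
  set K : ℝ := 2 * (1 + t / (b^2 * ((-b) / (2*((M - a)^2 + b^2)))^2)) / b^2 with hK
  have hb2 : (0:ℝ) < b^2 := by nlinarith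
  have hden : (0:ℝ) < (M - a)^2 + b^2 := by linarith [sq_nonneg (M - a)]
  have hcpos : (0:ℝ) < (-b) / (2*((M - a)^2 + b^2)) := div_pos (by linarith) (by linarith)
  have hK0 : 0 ≤ K := by
    rw [hK]
    have h1 : 0 ≤ t / (b^2 * ((-b) / (2*((M - a)^2 + b^2)))^2) :=
      div_nonneg ht.le (by positivity)
    positivity
  clear_value K
  -- per-N bound
  have hNbound : ∀ N : ℕ, 0 < N → (b - a) / N ≤ -b →
      ν (Set.Icc a b) ≤ ENNReal.ofReal ((N + 1 : ℝ) * (K * ((b - a)/N)^2)) := by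
    intro N hN0 hwb
    set w : ℝ := (b - a) / N with hw
    have hNR : (0:ℝ) < N := Nat.cast_pos.mpr hN0
    have hw0 : 0 < w := div_pos (by linarith) hNR
    have hNw : (N:ℝ) * w = b - a := by
      rw [hw]; field_simp
    clear_value w
    have hcover : Set.Icc a b ⊆ ⋃ k ∈ Finset.range (N+1),
        Set.Ioo (a + k*w - w) (a + k*w + w) := by
      intro u hu
      obtain ⟨hua, hub⟩ := hu
      set k : ℕ := ⌊(u - a)/w⌋₊ with hk
      have hk1 : (k:ℝ) ≤ (u - a)/w := Nat.floor_le (div_nonneg (by linarith) hw0.le)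
      have hk2 : (u - a)/w < k + 1 := Nat.lt_floor_add_one _
      have hk1' : (k:ℝ) * w ≤ u - a := by
        rw [← le_div_iff₀ hw0]; exact hk1
      have hk2' : u - a < ((k:ℝ) + 1) * w := by
        rw [← div_lt_iff₀ hw0]; exact hk2
      have hkN : k ≤ N := by
        have hq : (u - a)/w ≤ (N:ℝ) := by
          rw [div_le_iff₀ hw0]; linarith [hNw]
        have h2 := Nat.floor_le_floor hq
        rwa [Nat.floor_natCast] at h2
      refine Set.mem_biUnion (Finset.mem_range.mpr (Nat.lt_succ_of_le hkN)) ?_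
      constructor
      · linarith
      · linarith
    calc ν (Set.Icc a b) ≤ ν (⋃ k ∈ Finset.range (N+1),
          Set.Ioo (a + k*w - w) (a + k*w + w)) := measure_mono hcover
      _ ≤ ∑ k ∈ Finset.range (N+1), ν (Set.Ioo (a + k*w - w) (a + k*w + w)) :=
          measure_biUnion_finset_le _ _
      _ ≤ ∑ _k ∈ Finset.range (N+1), ENNReal.ofReal (K * w^2) := by
          apply Finset.sum_le_sum
          intro k hk
          have hkN : k ≤ N := Nat.lt_succ_iff.mp (Finset.mem_range.mp hk)
          have hxa : a ≤ a + k*w := le_add_of_nonneg_right (by positivity)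
          have hxb : a + k*w ≤ b := by
            have h2 : (k:ℝ) * w ≤ (N:ℝ) * w :=
              mul_le_mul_of_nonneg_right (Nat.cast_le.mpr hkN) hw0.le
            linarith [hNw]
          have hpb := point_bound t ht μ ν hμae h a b M hb hM0 hMμ hxa hxb hw0 hwb
          have hpb' : (ν (Set.Ioo (a + k*w - w) (a + k*w + w))).toReal ≤ K * w^2 := by
            rw [hK]; exact hpb
          calc ν (Set.Ioo (a + k*w - w) (a + k*w + w))
              = ENNReal.ofReal ((ν (Set.Ioo (a + k*w - w) (a + k*w + w))).toReal) :=
                (ENNReal.ofReal_toReal (measure_ne_top ν _)).symm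
            _ ≤ ENNReal.ofReal (K * w^2) := ENNReal.ofReal_le_ofReal hpb'
      _ ≤ ENNReal.ofReal ((N + 1 : ℝ) * (K * w^2)) := by
          have hcast : ((N+1:ℕ) : ENNReal) * ENNReal.ofReal (K*w^2) =
              ENNReal.ofReal ((N+1:ℝ) * (K*w^2)) := by
            rw [ENNReal.ofReal_mul (by positivity : (0:ℝ) ≤ (N+1:ℝ))]
            congr 1
            rw [← ENNReal.ofReal_natCast (N+1)]
            norm_num
          rw [Finset.sum_const, Finset.card_range, nsmul_eq_mul, hcast]
  -- pass to limit
  have htend : Filter.Tendsto (fun N : ℕ => ENNReal.ofReal ((2*K*(b-a)^2)/N))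
      Filter.atTop (nhds 0) := by
    rw [← ENNReal.ofReal_zero]
    exact ENNReal.tendsto_ofReal (tendsto_const_div_atTop_nhds_zero_nat (2*K*(b-a)^2))
  have hev : ∀ᶠ N : ℕ in Filter.atTop,
      ν (Set.Icc a b) ≤ ENNReal.ofReal ((2*K*(b-a)^2)/N) := by
    obtain ⟨N0, hN0⟩ : ∃ N0 : ℕ, (b - a) / (-b) ≤ N0 := exists_nat_ge _
    filter_upwards [Filter.eventually_ge_atTop (max N0 1)] with N hN
    have hN1 : 1 ≤ N := le_trans (le_max_right _ _) hN
    have hNN0 : N0 ≤ N := le_trans (le_max_left _ _) hN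
    have hNpos : 0 < N := hN1
    have hNR : (0:ℝ) < N := Nat.cast_pos.mpr hNpos
    have hwb : (b - a)/N ≤ -b := by
      rw [div_le_iff₀ hNR]
      have h1 : (b - a) / (-b) ≤ (N:ℝ) := le_trans hN0 (Nat.cast_le.mpr hNN0)
      rw [div_le_iff₀ (by linarith : (0:ℝ) < -b)] at h1
      linarith
    refine (hNbound N hNpos hwb).trans (ENNReal.ofReal_le_ofReal ?_)
    have hN1R : (1:ℝ) ≤ N := by exact_mod_cast hN1
    rw [div_pow]
    rw [show (N+1:ℝ) * (K * ((b-a)^2 / (N:ℝ)^2)) = K*(b-a)^2*(((N:ℝ)+1)/(N:ℝ)^2) by ring,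
        show 2*K*(b-a)^2/(N:ℝ) = K*(b-a)^2*(2/(N:ℝ)) by ring]
    apply mul_le_mul_of_nonneg_left _ (by positivity)
    rw [div_le_div_iff₀ (by positivity) hNR]
    nlinarith
  have hle0 : ν (Set.Icc a b) ≤ 0 := ge_of_tendsto htend hev
  exact le_zero_iff.mp hle0

end BoolPowAux


theorem boolean_power_preserves_positivity (t : ℝ) (ht : 0 < t) (μ ν : Measure ℝ)
    [IsProbabilityMeasure μ] [IsProbabilityMeasure ν]
    (hμ : μ (Set.Iio 0) = 0)
    (h : ∀ z : ℂ, 0 < z.im →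
      (∫ s, (z - (s : ℂ))⁻¹ ∂ν)⁻¹ =
        ((1 - t : ℝ) : ℂ) * z + (t : ℂ) * (∫ s, (z - (s : ℂ))⁻¹ ∂μ)⁻¹) :
    ν (Set.Iio 0) = 0 := by
  have hμae : ∀ᵐ s ∂μ, 0 ≤ s := by
    rw [MeasureTheory.ae_iff]
    have hset : {s : ℝ | ¬ 0 ≤ s} = Set.Iio 0 := by
      ext s; simp [Set.mem_Iio, not_le]
    rw [hset]; exact hμ
  have hIci : μ (Set.Ici 0) = 1 := by
    have hcompl := measure_compl (μ := μ) (s := Set.Iio (0:ℝ)) measurableSet_Iio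
      (measure_ne_top μ _)
    rw [hμ, measure_univ, Set.compl_Iio, tsub_zero] at hcompl
    exact hcompl
  obtain ⟨n, hn⟩ : ∃ n : ℕ, (1:ENNReal)/2 < μ (Set.Icc (0:ℝ) n) := by
    have hmono : Monotone (fun n : ℕ => Set.Icc (0:ℝ) (n:ℝ)) :=
      fun m n hmn => Set.Icc_subset_Icc le_rfl (Nat.cast_le.mpr hmn)
    have hU : (⋃ n : ℕ, Set.Icc (0:ℝ) (n:ℝ)) = Set.Ici 0 := by
      ext u
      simp only [Set.mem_iUnion, Set.mem_Icc, Set.mem_Ici]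
      constructor
      · rintro ⟨n, h1, _⟩; exact h1
      · intro hu; obtain ⟨n, hn⟩ := exists_nat_ge u; exact ⟨n, hu, hn⟩
    have hsup := hmono.measure_iUnion (μ := μ)
    rw [hU, hIci] at hsup
    have hlt : (1:ENNReal)/2 < ⨆ n : ℕ, μ (Set.Icc (0:ℝ) (n:ℝ)) := by
      rw [← hsup]
      exact ENNReal.half_lt_self one_ne_zero ENNReal.one_ne_top
    exact lt_iSup_iff.mp hlt
  have hMμ : (1:ℝ)/2 ≤ (μ (Set.Icc 0 (n:ℝ))).toReal := by
    have h1 := ENNReal.toReal_mono (measure_ne_top μ _) hn.le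
    have h2 : ((1:ENNReal)/2).toReal = (1:ℝ)/2 := by simp
    rw [h2] at h1
    exact h1
  have hsub : Set.Iio (0:ℝ) ⊆ ⋃ m : ℕ, Set.Icc (-(m:ℝ)-2) (-(1/((m:ℝ)+1))) := by
    intro u hu
    have hu0 : u < 0 := hu
    obtain ⟨m, hm⟩ := exists_nat_ge (max (-u) (1/(-u)))
    refine Set.mem_iUnion.mpr ⟨m, ?_, ?_⟩
    · have h1 := le_trans (le_max_left (-u) (1/(-u))) hm
      linarith
    · have h2 : 1/(-u) ≤ (m:ℝ)+1 := by
        have := le_trans (le_max_right (-u) (1/(-u))) hm; linarith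
      have h3 : 1/((m:ℝ)+1) ≤ -u := by
        rw [div_le_iff₀ (by positivity : (0:ℝ) < (m:ℝ)+1)]
        rw [div_le_iff₀ (by linarith : (0:ℝ) < -u)] at h2
        nlinarith
      linarith
  have hall : ∀ m : ℕ, ν (Set.Icc (-(m:ℝ)-2) (-(1/((m:ℝ)+1)))) = 0 := by
    intro m
    have hm0 : (0:ℝ) ≤ (m:ℝ) := Nat.cast_nonneg m
    have hbpos : (0:ℝ) < 1/((m:ℝ)+1) := by positivity
    refine BoolPowAux.interval_zero t ht μ ν hμae h (-(m:ℝ)-2) (-(1/((m:ℝ)+1))) (n:ℝ)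
      ?_ ?_ (Nat.cast_nonneg n) hMμ
    · have h1 : 1/((m:ℝ)+1) ≤ 1 := by
        rw [div_le_one (by positivity)]; linarith
      linarith
    · linarith
  exact le_antisymm (le_trans (measure_mono hsub)
    (le_of_eq (measure_iUnion_null_iff.mpr hall))) zero_le
end
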